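/- arXiv:2507.01655 — 9 statements merged into one kernel-verified Lean document; each statement's English description precedes it below -/
import Mathlib

section
/- Let A be an alternating 4-form on ℝ⁶. Suppose that for every index p ∈ {1,…,6} the 3-form e_p⌟A lies in the module Λ³₁₂, i.e. (i) Σ_{j,k,l} A(e_p,e_j,e_k,e_l)·Φ(e_j,e_k,e_l,e_i) = 0 for every i ∈ {1,…,6}, (ii) Σ_{j,k,l} A(e_p,e_j,e_k,e_l)·Ψ⁺(e_j,e_k,e_l) = 0, and (iii) Σ_{j,k,l} A(e_p,e_j,e_k,e_l)·Ψ⁻(e_j,e_k,e_l) = 0, where all sums run over 1,…,6. Then A = 0. -/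
open scoped BigOperators

noncomputable section

/-- The standard inner product on ℝ⁶. -/
def gIP (X Y : Fin 6 → ℝ) : ℝ := ∑ i, X i * Y i

/-- The standard orthonormal basis e₁,…,e₆ (0-indexed). -/
def e (i : Fin 6) : Fin 6 → ℝ := fun j => if j = i then 1 else 0

/-- The 2-form e_{ij} (0-indexed). -/
def two (i j : Fin 6) (X Y : Fin 6 → ℝ) : ℝ := X i * Y j - X j * Y i

/-- The 3-form e_{ijk} (0-indexed). -/
def three (i j k : Fin 6) (X Y Z : Fin 6 → ℝ) : ℝ :=
  X i * (Y j * Z k - Y k * Z j) - X j * (Y i * Z k - Y k * Z i) + X k * (Y i * Z j - Y j * Z i)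

/-- The 4-form e_{ijkl} (0-indexed). -/
def four (i j k l : Fin 6) (X Y Z W : Fin 6 → ℝ) : ℝ :=
  X i * three j k l Y Z W - X j * three i k l Y Z W
    + X k * three i j l Y Z W - X l * three i j k Y Z W

/-- F = −e₁₂ − e₃₄ − e₅₆. -/
def Fform (X Y : Fin 6 → ℝ) : ℝ := -two 0 1 X Y - two 2 3 X Y - two 4 5 X Y

/-- Ψ⁺ = −e₁₃₅ + e₂₃₆ + e₁₄₆ + e₂₄₅. -/
def Psip (X Y Z : Fin 6 → ℝ) : ℝ :=
  -three 0 2 4 X Y Z + three 1 2 5 X Y Z + three 0 3 5 X Y Z + three 1 3 4 X Y Z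

/-- Ψ⁻ = −e₁₃₆ − e₁₄₅ − e₂₃₅ + e₂₄₆. -/
def Psim (X Y Z : Fin 6 → ℝ) : ℝ :=
  -three 0 2 5 X Y Z - three 0 3 4 X Y Z - three 1 2 4 X Y Z + three 1 3 5 X Y Z

/-- Φ(X,Y,Z,V) = F(X,Y)F(Z,V) + F(Y,Z)F(X,V) + F(Z,X)F(Y,V). -/
def Phi (X Y Z V : Fin 6 → ℝ) : ℝ :=
  Fform X Y * Fform Z V + Fform Y Z * Fform X V + Fform Z X * Fform Y V

/-- The orthogonal complex structure: Je₁=e₂, Je₂=−e₁, Je₃=e₄, Je₄=−e₃, Je₅=e₆, Je₆=−e₅. -/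
def Jc (X : Fin 6 → ℝ) : Fin 6 → ℝ := ![-X 1, X 0, -X 3, X 2, -X 5, X 4]

/-- Θ⁺ = e₁₃₅ − e₁₄₆ − e₂₃₆ − e₂₄₅. -/
def Thp (X Y Z : Fin 6 → ℝ) : ℝ :=
  three 0 2 4 X Y Z - three 0 3 5 X Y Z - three 1 2 5 X Y Z - three 1 3 4 X Y Z

/-- Θ⁻ = e₁₃₆ + e₁₄₅ + e₂₃₅ − e₂₄₆. -/
def Thm (X Y Z : Fin 6 → ℝ) : ℝ :=
  three 0 2 5 X Y Z + three 0 3 4 X Y Z + three 1 2 4 X Y Z - three 1 3 5 X Y Z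

/-- Nijenhuis tensor N(X,Y) = [JX,JY] − [X,Y] − J[JX,Y] − J[X,JY] for a bracket `br`. -/
def Nij (br : (Fin 6 → ℝ) → (Fin 6 → ℝ) → (Fin 6 → ℝ)) (X Y : Fin 6 → ℝ) : Fin 6 → ℝ :=
  br (Jc X) (Jc Y) - br X Y - Jc (br (Jc X) Y) - Jc (br X (Jc Y))

/-- Chevalley–Eilenberg differential of a 2-form. -/
def d2 (br : (Fin 6 → ℝ) → (Fin 6 → ℝ) → (Fin 6 → ℝ))
    (α : (Fin 6 → ℝ) → (Fin 6 → ℝ) → ℝ) (X Y Z : Fin 6 → ℝ) : ℝ :=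
  -α (br X Y) Z + α (br X Z) Y - α (br Y Z) X

/-- Chevalley–Eilenberg differential of a 3-form. -/
def d3 (br : (Fin 6 → ℝ) → (Fin 6 → ℝ) → (Fin 6 → ℝ))
    (α : (Fin 6 → ℝ) → (Fin 6 → ℝ) → (Fin 6 → ℝ) → ℝ) (X Y Z W : Fin 6 → ℝ) : ℝ :=
  -α (br X Y) Z W + α (br X Z) Y W - α (br X W) Y Z
    - α (br Y Z) X W + α (br Y W) X Z - α (br Z W) X Y

/-- The torsion connection ∇ associated with a bracket `br` and a 3-form `T`:
g(∇_X Y, Z) = ½( g([X,Y],Z) − g([Y,Z],X) + g([Z,X],Y) + T(X,Y,Z) ). -/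
def nab (br : (Fin 6 → ℝ) → (Fin 6 → ℝ) → (Fin 6 → ℝ))
    (T : (Fin 6 → ℝ) → (Fin 6 → ℝ) → (Fin 6 → ℝ) → ℝ)
    (X Y : Fin 6 → ℝ) : Fin 6 → ℝ :=
  fun m => (1/2) * (gIP (br X Y) (e m) - gIP (br Y (e m)) X + gIP (br (e m) X) Y + T X Y (e m))

/-- The covariant derivative of a 3-form α:
(∇_X α)(Y,Z,V) = −α(∇_X Y,Z,V) − α(Y,∇_X Z,V) − α(Y,Z,∇_X V). -/
def nabForm3 (br : (Fin 6 → ℝ) → (Fin 6 → ℝ) → (Fin 6 → ℝ))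
    (T α : (Fin 6 → ℝ) → (Fin 6 → ℝ) → (Fin 6 → ℝ) → ℝ)
    (X Y Z V : Fin 6 → ℝ) : ℝ :=
  -α (nab br T X Y) Z V - α Y (nab br T X Z) V - α Y Z (nab br T X V)

/-- Curvature R(X,Y)Z = ∇_X∇_Y Z − ∇_Y∇_X Z − ∇_{[X,Y]}Z. -/
def Rmap (br : (Fin 6 → ℝ) → (Fin 6 → ℝ) → (Fin 6 → ℝ))
    (T : (Fin 6 → ℝ) → (Fin 6 → ℝ) → (Fin 6 → ℝ) → ℝ)
    (X Y Z : Fin 6 → ℝ) : Fin 6 → ℝ :=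
  nab br T X (nab br T Y Z) - nab br T Y (nab br T X Z) - nab br T (br X Y) Z

/-- R(X,Y,Z,V) = g(R(X,Y)Z,V). -/
def R4 (br : (Fin 6 → ℝ) → (Fin 6 → ℝ) → (Fin 6 → ℝ))
    (T : (Fin 6 → ℝ) → (Fin 6 → ℝ) → (Fin 6 → ℝ) → ℝ)
    (X Y Z V : Fin 6 → ℝ) : ℝ :=
  gIP (Rmap br T X Y Z) V


section Helpers
variable {V : Type*} [AddCommGroup V] [Module ℝ V]

theorem sw01 (f : V [⋀^Fin 4]→ₗ[ℝ] ℝ) (a b c d : V) : f ![a,b,c,d] = - f ![b,a,c,d] := by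
  have h : (![b,a,c,d] : Fin 4 → V) ∘ Equiv.swap 0 1 = ![a,b,c,d] := by
    funext m; fin_cases m <;> simp [Equiv.swap_apply_def]
  rw [← h, f.map_swap _ (by decide)]

theorem sw12 (f : V [⋀^Fin 4]→ₗ[ℝ] ℝ) (a b c d : V) : f ![a,b,c,d] = - f ![a,c,b,d] := by
  have h : (![a,c,b,d] : Fin 4 → V) ∘ Equiv.swap 1 2 = ![a,b,c,d] := by
    funext m; fin_cases m <;> simp [Equiv.swap_apply_def]
  rw [← h, f.map_swap _ (by decide)]

theorem sw23 (f : V [⋀^Fin 4]→ₗ[ℝ] ℝ) (a b c d : V) : f ![a,b,c,d] = - f ![a,b,d,c] := by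
  have h : (![a,b,d,c] : Fin 4 → V) ∘ Equiv.swap 2 3 = ![a,b,c,d] := by
    funext m; fin_cases m <;> simp [Equiv.swap_apply_def]
  rw [← h, f.map_swap _ (by decide)]

end Helpers

set_option maxHeartbeats 4000000 in
/-- if every contraction e_p⌟A of an alternating 4-form A on ℝ⁶ lies in Λ³₁₂,
then A = 0. -/
theorem stmt0 (A : (Fin 6 → ℝ) [⋀^Fin 4]→ₗ[ℝ] ℝ)
    (h1 : ∀ p i : Fin 6,
      ∑ j, ∑ k, ∑ l, A ![e p, e j, e k, e l] * Phi (e j) (e k) (e l) (e i) = 0)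
    (h2 : ∀ p : Fin 6,
      ∑ j, ∑ k, ∑ l, A ![e p, e j, e k, e l] * Psip (e j) (e k) (e l) = 0)
    (h3 : ∀ p : Fin 6,
      ∑ j, ∑ k, ∑ l, A ![e p, e j, e k, e l] * Psim (e j) (e k) (e l) = 0) :
    A = 0 := by
  have e_app : ∀ i j : Fin 6, e i j = if j = i then 1 else 0 := fun _ _ => rfl
  have s0013 : A ![e 0, e 0, e 1, e 3] = 0 := A.map_eq_zero_of_eq (i := 0) (j := 1) _ rfl (by decide)
  have s0014 : A ![e 0, e 0, e 1, e 4] = 0 := A.map_eq_zero_of_eq (i := 0) (j := 1) _ rfl (by decide)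
  have s0015 : A ![e 0, e 0, e 1, e 5] = 0 := A.map_eq_zero_of_eq (i := 0) (j := 1) _ rfl (by decide)
  have s0024 : A ![e 0, e 0, e 2, e 4] = 0 := A.map_eq_zero_of_eq (i := 0) (j := 1) _ rfl (by decide)
  have s0025 : A ![e 0, e 0, e 2, e 5] = 0 := A.map_eq_zero_of_eq (i := 0) (j := 1) _ rfl (by decide)
  have s0031 : A ![e 0, e 0, e 3, e 1] = 0 := A.map_eq_zero_of_eq (i := 0) (j := 1) _ rfl (by decide)
  have s0034 : A ![e 0, e 0, e 3, e 4] = 0 := A.map_eq_zero_of_eq (i := 0) (j := 1) _ rfl (by decide)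
  have s0035 : A ![e 0, e 0, e 3, e 5] = 0 := A.map_eq_zero_of_eq (i := 0) (j := 1) _ rfl (by decide)
  have s0041 : A ![e 0, e 0, e 4, e 1] = 0 := A.map_eq_zero_of_eq (i := 0) (j := 1) _ rfl (by decide)
  have s0042 : A ![e 0, e 0, e 4, e 2] = 0 := A.map_eq_zero_of_eq (i := 0) (j := 1) _ rfl (by decide)
  have s0043 : A ![e 0, e 0, e 4, e 3] = 0 := A.map_eq_zero_of_eq (i := 0) (j := 1) _ rfl (by decide)
  have s0051 : A ![e 0, e 0, e 5, e 1] = 0 := A.map_eq_zero_of_eq (i := 0) (j := 1) _ rfl (by decide)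
  have s0052 : A ![e 0, e 0, e 5, e 2] = 0 := A.map_eq_zero_of_eq (i := 0) (j := 1) _ rfl (by decide)
  have s0053 : A ![e 0, e 0, e 5, e 3] = 0 := A.map_eq_zero_of_eq (i := 0) (j := 1) _ rfl (by decide)
  have s0103 : A ![e 0, e 1, e 0, e 3] = 0 := A.map_eq_zero_of_eq (i := 0) (j := 2) _ rfl (by decide)
  have s0104 : A ![e 0, e 1, e 0, e 4] = 0 := A.map_eq_zero_of_eq (i := 0) (j := 2) _ rfl (by decide)
  have s0105 : A ![e 0, e 1, e 0, e 5] = 0 := A.map_eq_zero_of_eq (i := 0) (j := 2) _ rfl (by decide)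
  have s0130 : A ![e 0, e 1, e 3, e 0] = 0 := A.map_eq_zero_of_eq (i := 0) (j := 3) _ rfl (by decide)
  have s0132 : A ![e 0, e 1, e 3, e 2] = (-1:ℝ) * A ![e 0, e 1, e 2, e 3] := by
    conv_lhs => rw [sw23 A]
    ring
  have s0140 : A ![e 0, e 1, e 4, e 0] = 0 := A.map_eq_zero_of_eq (i := 0) (j := 3) _ rfl (by decide)
  have s0142 : A ![e 0, e 1, e 4, e 2] = (-1:ℝ) * A ![e 0, e 1, e 2, e 4] := by
    conv_lhs => rw [sw23 A]
    ring
  have s0143 : A ![e 0, e 1, e 4, e 3] = (-1:ℝ) * A ![e 0, e 1, e 3, e 4] := by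
    conv_lhs => rw [sw23 A]
    ring
  have s0150 : A ![e 0, e 1, e 5, e 0] = 0 := A.map_eq_zero_of_eq (i := 0) (j := 3) _ rfl (by decide)
  have s0152 : A ![e 0, e 1, e 5, e 2] = (-1:ℝ) * A ![e 0, e 1, e 2, e 5] := by
    conv_lhs => rw [sw23 A]
    ring
  have s0153 : A ![e 0, e 1, e 5, e 3] = (-1:ℝ) * A ![e 0, e 1, e 3, e 5] := by
    conv_lhs => rw [sw23 A]
    ring
  have s0154 : A ![e 0, e 1, e 5, e 4] = (-1:ℝ) * A ![e 0, e 1, e 4, e 5] := by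
    conv_lhs => rw [sw23 A]
    ring
  have s0204 : A ![e 0, e 2, e 0, e 4] = 0 := A.map_eq_zero_of_eq (i := 0) (j := 2) _ rfl (by decide)
  have s0205 : A ![e 0, e 2, e 0, e 5] = 0 := A.map_eq_zero_of_eq (i := 0) (j := 2) _ rfl (by decide)
  have s0213 : A ![e 0, e 2, e 1, e 3] = (-1:ℝ) * A ![e 0, e 1, e 2, e 3] := by
    conv_lhs => rw [sw12 A]
    ring
  have s0214 : A ![e 0, e 2, e 1, e 4] = (-1:ℝ) * A ![e 0, e 1, e 2, e 4] := by
    conv_lhs => rw [sw12 A]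
    ring
  have s0215 : A ![e 0, e 2, e 1, e 5] = (-1:ℝ) * A ![e 0, e 1, e 2, e 5] := by
    conv_lhs => rw [sw12 A]
    ring
  have s0231 : A ![e 0, e 2, e 3, e 1] = (1:ℝ) * A ![e 0, e 1, e 2, e 3] := by
    conv_lhs => rw [sw23 A, sw12 A]
    ring
  have s0240 : A ![e 0, e 2, e 4, e 0] = 0 := A.map_eq_zero_of_eq (i := 0) (j := 3) _ rfl (by decide)
  have s0241 : A ![e 0, e 2, e 4, e 1] = (1:ℝ) * A ![e 0, e 1, e 2, e 4] := by
    conv_lhs => rw [sw23 A, sw12 A]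
    ring
  have s0243 : A ![e 0, e 2, e 4, e 3] = (-1:ℝ) * A ![e 0, e 2, e 3, e 4] := by
    conv_lhs => rw [sw23 A]
    ring
  have s0250 : A ![e 0, e 2, e 5, e 0] = 0 := A.map_eq_zero_of_eq (i := 0) (j := 3) _ rfl (by decide)
  have s0251 : A ![e 0, e 2, e 5, e 1] = (1:ℝ) * A ![e 0, e 1, e 2, e 5] := by
    conv_lhs => rw [sw23 A, sw12 A]
    ring
  have s0253 : A ![e 0, e 2, e 5, e 3] = (-1:ℝ) * A ![e 0, e 2, e 3, e 5] := by
    conv_lhs => rw [sw23 A]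
    ring
  have s0301 : A ![e 0, e 3, e 0, e 1] = 0 := A.map_eq_zero_of_eq (i := 0) (j := 2) _ rfl (by decide)
  have s0304 : A ![e 0, e 3, e 0, e 4] = 0 := A.map_eq_zero_of_eq (i := 0) (j := 2) _ rfl (by decide)
  have s0305 : A ![e 0, e 3, e 0, e 5] = 0 := A.map_eq_zero_of_eq (i := 0) (j := 2) _ rfl (by decide)
  have s0310 : A ![e 0, e 3, e 1, e 0] = 0 := A.map_eq_zero_of_eq (i := 0) (j := 3) _ rfl (by decide)
  have s0312 : A ![e 0, e 3, e 1, e 2] = (1:ℝ) * A ![e 0, e 1, e 2, e 3] := by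
    conv_lhs => rw [sw12 A, sw23 A]
    ring
  have s0314 : A ![e 0, e 3, e 1, e 4] = (-1:ℝ) * A ![e 0, e 1, e 3, e 4] := by
    conv_lhs => rw [sw12 A]
    ring
  have s0315 : A ![e 0, e 3, e 1, e 5] = (-1:ℝ) * A ![e 0, e 1, e 3, e 5] := by
    conv_lhs => rw [sw12 A]
    ring
  have s0321 : A ![e 0, e 3, e 2, e 1] = (-1:ℝ) * A ![e 0, e 1, e 2, e 3] := by
    conv_lhs => rw [sw12 A, sw23 A, sw12 A]
    ring
  have s0324 : A ![e 0, e 3, e 2, e 4] = (-1:ℝ) * A ![e 0, e 2, e 3, e 4] := by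
    conv_lhs => rw [sw12 A]
    ring
  have s0325 : A ![e 0, e 3, e 2, e 5] = (-1:ℝ) * A ![e 0, e 2, e 3, e 5] := by
    conv_lhs => rw [sw12 A]
    ring
  have s0340 : A ![e 0, e 3, e 4, e 0] = 0 := A.map_eq_zero_of_eq (i := 0) (j := 3) _ rfl (by decide)
  have s0341 : A ![e 0, e 3, e 4, e 1] = (1:ℝ) * A ![e 0, e 1, e 3, e 4] := by
    conv_lhs => rw [sw23 A, sw12 A]
    ring
  have s0342 : A ![e 0, e 3, e 4, e 2] = (1:ℝ) * A ![e 0, e 2, e 3, e 4] := by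
    conv_lhs => rw [sw23 A, sw12 A]
    ring
  have s0350 : A ![e 0, e 3, e 5, e 0] = 0 := A.map_eq_zero_of_eq (i := 0) (j := 3) _ rfl (by decide)
  have s0351 : A ![e 0, e 3, e 5, e 1] = (1:ℝ) * A ![e 0, e 1, e 3, e 5] := by
    conv_lhs => rw [sw23 A, sw12 A]
    ring
  have s0352 : A ![e 0, e 3, e 5, e 2] = (1:ℝ) * A ![e 0, e 2, e 3, e 5] := by
    conv_lhs => rw [sw23 A, sw12 A]
    ring
  have s0354 : A ![e 0, e 3, e 5, e 4] = (-1:ℝ) * A ![e 0, e 3, e 4, e 5] := by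
    conv_lhs => rw [sw23 A]
    ring
  have s0401 : A ![e 0, e 4, e 0, e 1] = 0 := A.map_eq_zero_of_eq (i := 0) (j := 2) _ rfl (by decide)
  have s0402 : A ![e 0, e 4, e 0, e 2] = 0 := A.map_eq_zero_of_eq (i := 0) (j := 2) _ rfl (by decide)
  have s0403 : A ![e 0, e 4, e 0, e 3] = 0 := A.map_eq_zero_of_eq (i := 0) (j := 2) _ rfl (by decide)
  have s0410 : A ![e 0, e 4, e 1, e 0] = 0 := A.map_eq_zero_of_eq (i := 0) (j := 3) _ rfl (by decide)
  have s0412 : A ![e 0, e 4, e 1, e 2] = (1:ℝ) * A ![e 0, e 1, e 2, e 4] := by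
    conv_lhs => rw [sw12 A, sw23 A]
    ring
  have s0413 : A ![e 0, e 4, e 1, e 3] = (1:ℝ) * A ![e 0, e 1, e 3, e 4] := by
    conv_lhs => rw [sw12 A, sw23 A]
    ring
  have s0415 : A ![e 0, e 4, e 1, e 5] = (-1:ℝ) * A ![e 0, e 1, e 4, e 5] := by
    conv_lhs => rw [sw12 A]
    ring
  have s0420 : A ![e 0, e 4, e 2, e 0] = 0 := A.map_eq_zero_of_eq (i := 0) (j := 3) _ rfl (by decide)
  have s0421 : A ![e 0, e 4, e 2, e 1] = (-1:ℝ) * A ![e 0, e 1, e 2, e 4] := by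
    conv_lhs => rw [sw12 A, sw23 A, sw12 A]
    ring
  have s0423 : A ![e 0, e 4, e 2, e 3] = (1:ℝ) * A ![e 0, e 2, e 3, e 4] := by
    conv_lhs => rw [sw12 A, sw23 A]
    ring
  have s0430 : A ![e 0, e 4, e 3, e 0] = 0 := A.map_eq_zero_of_eq (i := 0) (j := 3) _ rfl (by decide)
  have s0431 : A ![e 0, e 4, e 3, e 1] = (-1:ℝ) * A ![e 0, e 1, e 3, e 4] := by
    conv_lhs => rw [sw12 A, sw23 A, sw12 A]
    ring
  have s0432 : A ![e 0, e 4, e 3, e 2] = (-1:ℝ) * A ![e 0, e 2, e 3, e 4] := by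
    conv_lhs => rw [sw12 A, sw23 A, sw12 A]
    ring
  have s0435 : A ![e 0, e 4, e 3, e 5] = (-1:ℝ) * A ![e 0, e 3, e 4, e 5] := by
    conv_lhs => rw [sw12 A]
    ring
  have s0451 : A ![e 0, e 4, e 5, e 1] = (1:ℝ) * A ![e 0, e 1, e 4, e 5] := by
    conv_lhs => rw [sw23 A, sw12 A]
    ring
  have s0453 : A ![e 0, e 4, e 5, e 3] = (1:ℝ) * A ![e 0, e 3, e 4, e 5] := by
    conv_lhs => rw [sw23 A, sw12 A]
    ring
  have s0501 : A ![e 0, e 5, e 0, e 1] = 0 := A.map_eq_zero_of_eq (i := 0) (j := 2) _ rfl (by decide)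
  have s0502 : A ![e 0, e 5, e 0, e 2] = 0 := A.map_eq_zero_of_eq (i := 0) (j := 2) _ rfl (by decide)
  have s0503 : A ![e 0, e 5, e 0, e 3] = 0 := A.map_eq_zero_of_eq (i := 0) (j := 2) _ rfl (by decide)
  have s0510 : A ![e 0, e 5, e 1, e 0] = 0 := A.map_eq_zero_of_eq (i := 0) (j := 3) _ rfl (by decide)
  have s0512 : A ![e 0, e 5, e 1, e 2] = (1:ℝ) * A ![e 0, e 1, e 2, e 5] := by
    conv_lhs => rw [sw12 A, sw23 A]
    ring
  have s0513 : A ![e 0, e 5, e 1, e 3] = (1:ℝ) * A ![e 0, e 1, e 3, e 5] := by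
    conv_lhs => rw [sw12 A, sw23 A]
    ring
  have s0514 : A ![e 0, e 5, e 1, e 4] = (1:ℝ) * A ![e 0, e 1, e 4, e 5] := by
    conv_lhs => rw [sw12 A, sw23 A]
    ring
  have s0520 : A ![e 0, e 5, e 2, e 0] = 0 := A.map_eq_zero_of_eq (i := 0) (j := 3) _ rfl (by decide)
  have s0521 : A ![e 0, e 5, e 2, e 1] = (-1:ℝ) * A ![e 0, e 1, e 2, e 5] := by
    conv_lhs => rw [sw12 A, sw23 A, sw12 A]
    ring
  have s0523 : A ![e 0, e 5, e 2, e 3] = (1:ℝ) * A ![e 0, e 2, e 3, e 5] := by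
    conv_lhs => rw [sw12 A, sw23 A]
    ring
  have s0530 : A ![e 0, e 5, e 3, e 0] = 0 := A.map_eq_zero_of_eq (i := 0) (j := 3) _ rfl (by decide)
  have s0531 : A ![e 0, e 5, e 3, e 1] = (-1:ℝ) * A ![e 0, e 1, e 3, e 5] := by
    conv_lhs => rw [sw12 A, sw23 A, sw12 A]
    ring
  have s0532 : A ![e 0, e 5, e 3, e 2] = (-1:ℝ) * A ![e 0, e 2, e 3, e 5] := by
    conv_lhs => rw [sw12 A, sw23 A, sw12 A]
    ring
  have s0534 : A ![e 0, e 5, e 3, e 4] = (1:ℝ) * A ![e 0, e 3, e 4, e 5] := by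
    conv_lhs => rw [sw12 A, sw23 A]
    ring
  have s0541 : A ![e 0, e 5, e 4, e 1] = (-1:ℝ) * A ![e 0, e 1, e 4, e 5] := by
    conv_lhs => rw [sw12 A, sw23 A, sw12 A]
    ring
  have s0543 : A ![e 0, e 5, e 4, e 3] = (-1:ℝ) * A ![e 0, e 3, e 4, e 5] := by
    conv_lhs => rw [sw12 A, sw23 A, sw12 A]
    ring
  have s1012 : A ![e 1, e 0, e 1, e 2] = 0 := A.map_eq_zero_of_eq (i := 0) (j := 2) _ rfl (by decide)
  have s1013 : A ![e 1, e 0, e 1, e 3] = 0 := A.map_eq_zero_of_eq (i := 0) (j := 2) _ rfl (by decide)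
  have s1014 : A ![e 1, e 0, e 1, e 4] = 0 := A.map_eq_zero_of_eq (i := 0) (j := 2) _ rfl (by decide)
  have s1015 : A ![e 1, e 0, e 1, e 5] = 0 := A.map_eq_zero_of_eq (i := 0) (j := 2) _ rfl (by decide)
  have s1021 : A ![e 1, e 0, e 2, e 1] = 0 := A.map_eq_zero_of_eq (i := 0) (j := 3) _ rfl (by decide)
  have s1031 : A ![e 1, e 0, e 3, e 1] = 0 := A.map_eq_zero_of_eq (i := 0) (j := 3) _ rfl (by decide)
  have s1041 : A ![e 1, e 0, e 4, e 1] = 0 := A.map_eq_zero_of_eq (i := 0) (j := 3) _ rfl (by decide)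
  have s1051 : A ![e 1, e 0, e 5, e 1] = 0 := A.map_eq_zero_of_eq (i := 0) (j := 3) _ rfl (by decide)
  have s1102 : A ![e 1, e 1, e 0, e 2] = 0 := A.map_eq_zero_of_eq (i := 0) (j := 1) _ rfl (by decide)
  have s1103 : A ![e 1, e 1, e 0, e 3] = 0 := A.map_eq_zero_of_eq (i := 0) (j := 1) _ rfl (by decide)
  have s1104 : A ![e 1, e 1, e 0, e 4] = 0 := A.map_eq_zero_of_eq (i := 0) (j := 1) _ rfl (by decide)
  have s1105 : A ![e 1, e 1, e 0, e 5] = 0 := A.map_eq_zero_of_eq (i := 0) (j := 1) _ rfl (by decide)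
  have s1120 : A ![e 1, e 1, e 2, e 0] = 0 := A.map_eq_zero_of_eq (i := 0) (j := 1) _ rfl (by decide)
  have s1130 : A ![e 1, e 1, e 3, e 0] = 0 := A.map_eq_zero_of_eq (i := 0) (j := 1) _ rfl (by decide)
  have s1140 : A ![e 1, e 1, e 4, e 0] = 0 := A.map_eq_zero_of_eq (i := 0) (j := 1) _ rfl (by decide)
  have s1150 : A ![e 1, e 1, e 5, e 0] = 0 := A.map_eq_zero_of_eq (i := 0) (j := 1) _ rfl (by decide)
  have s1201 : A ![e 1, e 2, e 0, e 1] = 0 := A.map_eq_zero_of_eq (i := 0) (j := 3) _ rfl (by decide)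
  have s1210 : A ![e 1, e 2, e 1, e 0] = 0 := A.map_eq_zero_of_eq (i := 0) (j := 2) _ rfl (by decide)
  have s1243 : A ![e 1, e 2, e 4, e 3] = (-1:ℝ) * A ![e 1, e 2, e 3, e 4] := by
    conv_lhs => rw [sw23 A]
    ring
  have s1253 : A ![e 1, e 2, e 5, e 3] = (-1:ℝ) * A ![e 1, e 2, e 3, e 5] := by
    conv_lhs => rw [sw23 A]
    ring
  have s1254 : A ![e 1, e 2, e 5, e 4] = (-1:ℝ) * A ![e 1, e 2, e 4, e 5] := by
    conv_lhs => rw [sw23 A]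
    ring
  have s1301 : A ![e 1, e 3, e 0, e 1] = 0 := A.map_eq_zero_of_eq (i := 0) (j := 3) _ rfl (by decide)
  have s1310 : A ![e 1, e 3, e 1, e 0] = 0 := A.map_eq_zero_of_eq (i := 0) (j := 2) _ rfl (by decide)
  have s1324 : A ![e 1, e 3, e 2, e 4] = (-1:ℝ) * A ![e 1, e 2, e 3, e 4] := by
    conv_lhs => rw [sw12 A]
    ring
  have s1325 : A ![e 1, e 3, e 2, e 5] = (-1:ℝ) * A ![e 1, e 2, e 3, e 5] := by
    conv_lhs => rw [sw12 A]
    ring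
  have s1342 : A ![e 1, e 3, e 4, e 2] = (1:ℝ) * A ![e 1, e 2, e 3, e 4] := by
    conv_lhs => rw [sw23 A, sw12 A]
    ring
  have s1352 : A ![e 1, e 3, e 5, e 2] = (1:ℝ) * A ![e 1, e 2, e 3, e 5] := by
    conv_lhs => rw [sw23 A, sw12 A]
    ring
  have s1354 : A ![e 1, e 3, e 5, e 4] = (-1:ℝ) * A ![e 1, e 3, e 4, e 5] := by
    conv_lhs => rw [sw23 A]
    ring
  have s1401 : A ![e 1, e 4, e 0, e 1] = 0 := A.map_eq_zero_of_eq (i := 0) (j := 3) _ rfl (by decide)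
  have s1410 : A ![e 1, e 4, e 1, e 0] = 0 := A.map_eq_zero_of_eq (i := 0) (j := 2) _ rfl (by decide)
  have s1423 : A ![e 1, e 4, e 2, e 3] = (1:ℝ) * A ![e 1, e 2, e 3, e 4] := by
    conv_lhs => rw [sw12 A, sw23 A]
    ring
  have s1425 : A ![e 1, e 4, e 2, e 5] = (-1:ℝ) * A ![e 1, e 2, e 4, e 5] := by
    conv_lhs => rw [sw12 A]
    ring
  have s1432 : A ![e 1, e 4, e 3, e 2] = (-1:ℝ) * A ![e 1, e 2, e 3, e 4] := by
    conv_lhs => rw [sw12 A, sw23 A, sw12 A]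
    ring
  have s1435 : A ![e 1, e 4, e 3, e 5] = (-1:ℝ) * A ![e 1, e 3, e 4, e 5] := by
    conv_lhs => rw [sw12 A]
    ring
  have s1452 : A ![e 1, e 4, e 5, e 2] = (1:ℝ) * A ![e 1, e 2, e 4, e 5] := by
    conv_lhs => rw [sw23 A, sw12 A]
    ring
  have s1453 : A ![e 1, e 4, e 5, e 3] = (1:ℝ) * A ![e 1, e 3, e 4, e 5] := by
    conv_lhs => rw [sw23 A, sw12 A]
    ring
  have s1501 : A ![e 1, e 5, e 0, e 1] = 0 := A.map_eq_zero_of_eq (i := 0) (j := 3) _ rfl (by decide)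
  have s1510 : A ![e 1, e 5, e 1, e 0] = 0 := A.map_eq_zero_of_eq (i := 0) (j := 2) _ rfl (by decide)
  have s1523 : A ![e 1, e 5, e 2, e 3] = (1:ℝ) * A ![e 1, e 2, e 3, e 5] := by
    conv_lhs => rw [sw12 A, sw23 A]
    ring
  have s1524 : A ![e 1, e 5, e 2, e 4] = (1:ℝ) * A ![e 1, e 2, e 4, e 5] := by
    conv_lhs => rw [sw12 A, sw23 A]
    ring
  have s1532 : A ![e 1, e 5, e 3, e 2] = (-1:ℝ) * A ![e 1, e 2, e 3, e 5] := by
    conv_lhs => rw [sw12 A, sw23 A, sw12 A]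
    ring
  have s1534 : A ![e 1, e 5, e 3, e 4] = (1:ℝ) * A ![e 1, e 3, e 4, e 5] := by
    conv_lhs => rw [sw12 A, sw23 A]
    ring
  have s1542 : A ![e 1, e 5, e 4, e 2] = (-1:ℝ) * A ![e 1, e 2, e 4, e 5] := by
    conv_lhs => rw [sw12 A, sw23 A, sw12 A]
    ring
  have s1543 : A ![e 1, e 5, e 4, e 3] = (-1:ℝ) * A ![e 1, e 3, e 4, e 5] := by
    conv_lhs => rw [sw12 A, sw23 A, sw12 A]
    ring
  have s2013 : A ![e 2, e 0, e 1, e 3] = (1:ℝ) * A ![e 0, e 1, e 2, e 3] := by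
    conv_lhs => rw [sw01 A, sw12 A]
    ring
  have s2014 : A ![e 2, e 0, e 1, e 4] = (1:ℝ) * A ![e 0, e 1, e 2, e 4] := by
    conv_lhs => rw [sw01 A, sw12 A]
    ring
  have s2015 : A ![e 2, e 0, e 1, e 5] = (1:ℝ) * A ![e 0, e 1, e 2, e 5] := by
    conv_lhs => rw [sw01 A, sw12 A]
    ring
  have s2023 : A ![e 2, e 0, e 2, e 3] = 0 := A.map_eq_zero_of_eq (i := 0) (j := 2) _ rfl (by decide)
  have s2031 : A ![e 2, e 0, e 3, e 1] = (-1:ℝ) * A ![e 0, e 1, e 2, e 3] := by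
    conv_lhs => rw [sw01 A, sw23 A, sw12 A]
    ring
  have s2032 : A ![e 2, e 0, e 3, e 2] = 0 := A.map_eq_zero_of_eq (i := 0) (j := 3) _ rfl (by decide)
  have s2041 : A ![e 2, e 0, e 4, e 1] = (-1:ℝ) * A ![e 0, e 1, e 2, e 4] := by
    conv_lhs => rw [sw01 A, sw23 A, sw12 A]
    ring
  have s2045 : A ![e 2, e 0, e 4, e 5] = (-1:ℝ) * A ![e 0, e 2, e 4, e 5] := by
    conv_lhs => rw [sw01 A]
    ring
  have s2051 : A ![e 2, e 0, e 5, e 1] = (-1:ℝ) * A ![e 0, e 1, e 2, e 5] := by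
    conv_lhs => rw [sw01 A, sw23 A, sw12 A]
    ring
  have s2054 : A ![e 2, e 0, e 5, e 4] = (1:ℝ) * A ![e 0, e 2, e 4, e 5] := by
    conv_lhs => rw [sw01 A, sw23 A]
    ring
  have s2103 : A ![e 2, e 1, e 0, e 3] = (-1:ℝ) * A ![e 0, e 1, e 2, e 3] := by
    conv_lhs => rw [sw01 A, sw12 A, sw01 A]
    ring
  have s2104 : A ![e 2, e 1, e 0, e 4] = (-1:ℝ) * A ![e 0, e 1, e 2, e 4] := by
    conv_lhs => rw [sw01 A, sw12 A, sw01 A]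
    ring
  have s2105 : A ![e 2, e 1, e 0, e 5] = (-1:ℝ) * A ![e 0, e 1, e 2, e 5] := by
    conv_lhs => rw [sw01 A, sw12 A, sw01 A]
    ring
  have s2130 : A ![e 2, e 1, e 3, e 0] = (1:ℝ) * A ![e 0, e 1, e 2, e 3] := by
    conv_lhs => rw [sw01 A, sw23 A, sw12 A, sw01 A]
    ring
  have s2140 : A ![e 2, e 1, e 4, e 0] = (1:ℝ) * A ![e 0, e 1, e 2, e 4] := by
    conv_lhs => rw [sw01 A, sw23 A, sw12 A, sw01 A]
    ring
  have s2150 : A ![e 2, e 1, e 5, e 0] = (1:ℝ) * A ![e 0, e 1, e 2, e 5] := by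
    conv_lhs => rw [sw01 A, sw23 A, sw12 A, sw01 A]
    ring
  have s2203 : A ![e 2, e 2, e 0, e 3] = 0 := A.map_eq_zero_of_eq (i := 0) (j := 1) _ rfl (by decide)
  have s2230 : A ![e 2, e 2, e 3, e 0] = 0 := A.map_eq_zero_of_eq (i := 0) (j := 1) _ rfl (by decide)
  have s2234 : A ![e 2, e 2, e 3, e 4] = 0 := A.map_eq_zero_of_eq (i := 0) (j := 1) _ rfl (by decide)
  have s2235 : A ![e 2, e 2, e 3, e 5] = 0 := A.map_eq_zero_of_eq (i := 0) (j := 1) _ rfl (by decide)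
  have s2243 : A ![e 2, e 2, e 4, e 3] = 0 := A.map_eq_zero_of_eq (i := 0) (j := 1) _ rfl (by decide)
  have s2253 : A ![e 2, e 2, e 5, e 3] = 0 := A.map_eq_zero_of_eq (i := 0) (j := 1) _ rfl (by decide)
  have s2301 : A ![e 2, e 3, e 0, e 1] = (1:ℝ) * A ![e 0, e 1, e 2, e 3] := by
    conv_lhs => rw [sw12 A, sw23 A, sw01 A, sw12 A]
    ring
  have s2302 : A ![e 2, e 3, e 0, e 2] = 0 := A.map_eq_zero_of_eq (i := 0) (j := 3) _ rfl (by decide)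
  have s2310 : A ![e 2, e 3, e 1, e 0] = (-1:ℝ) * A ![e 0, e 1, e 2, e 3] := by
    conv_lhs => rw [sw12 A, sw23 A, sw01 A, sw12 A, sw01 A]
    ring
  have s2320 : A ![e 2, e 3, e 2, e 0] = 0 := A.map_eq_zero_of_eq (i := 0) (j := 2) _ rfl (by decide)
  have s2324 : A ![e 2, e 3, e 2, e 4] = 0 := A.map_eq_zero_of_eq (i := 0) (j := 2) _ rfl (by decide)
  have s2325 : A ![e 2, e 3, e 2, e 5] = 0 := A.map_eq_zero_of_eq (i := 0) (j := 2) _ rfl (by decide)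
  have s2342 : A ![e 2, e 3, e 4, e 2] = 0 := A.map_eq_zero_of_eq (i := 0) (j := 3) _ rfl (by decide)
  have s2352 : A ![e 2, e 3, e 5, e 2] = 0 := A.map_eq_zero_of_eq (i := 0) (j := 3) _ rfl (by decide)
  have s2354 : A ![e 2, e 3, e 5, e 4] = (-1:ℝ) * A ![e 2, e 3, e 4, e 5] := by
    conv_lhs => rw [sw23 A]
    ring
  have s2401 : A ![e 2, e 4, e 0, e 1] = (1:ℝ) * A ![e 0, e 1, e 2, e 4] := by
    conv_lhs => rw [sw12 A, sw23 A, sw01 A, sw12 A]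
    ring
  have s2405 : A ![e 2, e 4, e 0, e 5] = (1:ℝ) * A ![e 0, e 2, e 4, e 5] := by
    conv_lhs => rw [sw12 A, sw01 A]
    ring
  have s2410 : A ![e 2, e 4, e 1, e 0] = (-1:ℝ) * A ![e 0, e 1, e 2, e 4] := by
    conv_lhs => rw [sw12 A, sw23 A, sw01 A, sw12 A, sw01 A]
    ring
  have s2423 : A ![e 2, e 4, e 2, e 3] = 0 := A.map_eq_zero_of_eq (i := 0) (j := 2) _ rfl (by decide)
  have s2432 : A ![e 2, e 4, e 3, e 2] = 0 := A.map_eq_zero_of_eq (i := 0) (j := 3) _ rfl (by decide)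
  have s2435 : A ![e 2, e 4, e 3, e 5] = (-1:ℝ) * A ![e 2, e 3, e 4, e 5] := by
    conv_lhs => rw [sw12 A]
    ring
  have s2450 : A ![e 2, e 4, e 5, e 0] = (-1:ℝ) * A ![e 0, e 2, e 4, e 5] := by
    conv_lhs => rw [sw23 A, sw12 A, sw01 A]
    ring
  have s2453 : A ![e 2, e 4, e 5, e 3] = (1:ℝ) * A ![e 2, e 3, e 4, e 5] := by
    conv_lhs => rw [sw23 A, sw12 A]
    ring
  have s2501 : A ![e 2, e 5, e 0, e 1] = (1:ℝ) * A ![e 0, e 1, e 2, e 5] := by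
    conv_lhs => rw [sw12 A, sw23 A, sw01 A, sw12 A]
    ring
  have s2504 : A ![e 2, e 5, e 0, e 4] = (-1:ℝ) * A ![e 0, e 2, e 4, e 5] := by
    conv_lhs => rw [sw12 A, sw23 A, sw01 A]
    ring
  have s2510 : A ![e 2, e 5, e 1, e 0] = (-1:ℝ) * A ![e 0, e 1, e 2, e 5] := by
    conv_lhs => rw [sw12 A, sw23 A, sw01 A, sw12 A, sw01 A]
    ring
  have s2523 : A ![e 2, e 5, e 2, e 3] = 0 := A.map_eq_zero_of_eq (i := 0) (j := 2) _ rfl (by decide)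
  have s2532 : A ![e 2, e 5, e 3, e 2] = 0 := A.map_eq_zero_of_eq (i := 0) (j := 3) _ rfl (by decide)
  have s2534 : A ![e 2, e 5, e 3, e 4] = (1:ℝ) * A ![e 2, e 3, e 4, e 5] := by
    conv_lhs => rw [sw12 A, sw23 A]
    ring
  have s2540 : A ![e 2, e 5, e 4, e 0] = (1:ℝ) * A ![e 0, e 2, e 4, e 5] := by
    conv_lhs => rw [sw12 A, sw23 A, sw12 A, sw01 A]
    ring
  have s2543 : A ![e 2, e 5, e 4, e 3] = (-1:ℝ) * A ![e 2, e 3, e 4, e 5] := by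
    conv_lhs => rw [sw12 A, sw23 A, sw12 A]
    ring
  have s4015 : A ![e 4, e 0, e 1, e 5] = (1:ℝ) * A ![e 0, e 1, e 4, e 5] := by
    conv_lhs => rw [sw01 A, sw12 A]
    ring
  have s4051 : A ![e 4, e 0, e 5, e 1] = (-1:ℝ) * A ![e 0, e 1, e 4, e 5] := by
    conv_lhs => rw [sw01 A, sw23 A, sw12 A]
    ring
  have s4105 : A ![e 4, e 1, e 0, e 5] = (-1:ℝ) * A ![e 0, e 1, e 4, e 5] := by
    conv_lhs => rw [sw01 A, sw12 A, sw01 A]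
    ring
  have s4150 : A ![e 4, e 1, e 5, e 0] = (1:ℝ) * A ![e 0, e 1, e 4, e 5] := by
    conv_lhs => rw [sw01 A, sw23 A, sw12 A, sw01 A]
    ring
  have s4235 : A ![e 4, e 2, e 3, e 5] = (1:ℝ) * A ![e 2, e 3, e 4, e 5] := by
    conv_lhs => rw [sw01 A, sw12 A]
    ring
  have s4253 : A ![e 4, e 2, e 5, e 3] = (-1:ℝ) * A ![e 2, e 3, e 4, e 5] := by
    conv_lhs => rw [sw01 A, sw23 A, sw12 A]
    ring
  have s4325 : A ![e 4, e 3, e 2, e 5] = (-1:ℝ) * A ![e 2, e 3, e 4, e 5] := by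
    conv_lhs => rw [sw01 A, sw12 A, sw01 A]
    ring
  have s4352 : A ![e 4, e 3, e 5, e 2] = (1:ℝ) * A ![e 2, e 3, e 4, e 5] := by
    conv_lhs => rw [sw01 A, sw23 A, sw12 A, sw01 A]
    ring
  have s4501 : A ![e 4, e 5, e 0, e 1] = (1:ℝ) * A ![e 0, e 1, e 4, e 5] := by
    conv_lhs => rw [sw12 A, sw23 A, sw01 A, sw12 A]
    ring
  have s4510 : A ![e 4, e 5, e 1, e 0] = (-1:ℝ) * A ![e 0, e 1, e 4, e 5] := by
    conv_lhs => rw [sw12 A, sw23 A, sw01 A, sw12 A, sw01 A]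
    ring
  have s4523 : A ![e 4, e 5, e 2, e 3] = (1:ℝ) * A ![e 2, e 3, e 4, e 5] := by
    conv_lhs => rw [sw12 A, sw23 A, sw01 A, sw12 A]
    ring
  have s4532 : A ![e 4, e 5, e 3, e 2] = (-1:ℝ) * A ![e 2, e 3, e 4, e 5] := by
    conv_lhs => rw [sw12 A, sw23 A, sw01 A, sw12 A, sw01 A]
    ring
  have Hh1_0_0 := h1 0 0
  simp only [Fin.sum_univ_six] at Hh1_0_0
  simp (config := { maxSteps := 10000000 }) only [Phi, Fform, two, e_app,
    Fin.reduceEq, reduceIte, mul_zero, zero_mul, mul_one, one_mul,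
    sub_zero, zero_sub, add_zero, zero_add, neg_zero, mul_neg, neg_neg,
    sub_self] at Hh1_0_0
  have Hh1_0_2 := h1 0 2
  simp only [Fin.sum_univ_six] at Hh1_0_2
  simp (config := { maxSteps := 10000000 }) only [Phi, Fform, two, e_app,
    Fin.reduceEq, reduceIte, mul_zero, zero_mul, mul_one, one_mul,
    sub_zero, zero_sub, add_zero, zero_add, neg_zero, mul_neg, neg_neg,
    sub_self] at Hh1_0_2
  have Hh1_0_4 := h1 0 4
  simp only [Fin.sum_univ_six] at Hh1_0_4
  simp (config := { maxSteps := 10000000 }) only [Phi, Fform, two, e_app,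
    Fin.reduceEq, reduceIte, mul_zero, zero_mul, mul_one, one_mul,
    sub_zero, zero_sub, add_zero, zero_add, neg_zero, mul_neg, neg_neg,
    sub_self] at Hh1_0_4
  have Hh1_0_5 := h1 0 5
  simp only [Fin.sum_univ_six] at Hh1_0_5
  simp (config := { maxSteps := 10000000 }) only [Phi, Fform, two, e_app,
    Fin.reduceEq, reduceIte, mul_zero, zero_mul, mul_one, one_mul,
    sub_zero, zero_sub, add_zero, zero_add, neg_zero, mul_neg, neg_neg,
    sub_self] at Hh1_0_5
  have Hh1_1_2 := h1 1 2
  simp only [Fin.sum_univ_six] at Hh1_1_2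
  simp (config := { maxSteps := 10000000 }) only [Phi, Fform, two, e_app,
    Fin.reduceEq, reduceIte, mul_zero, zero_mul, mul_one, one_mul,
    sub_zero, zero_sub, add_zero, zero_add, neg_zero, mul_neg, neg_neg,
    sub_self] at Hh1_1_2
  have Hh1_1_3 := h1 1 3
  simp only [Fin.sum_univ_six] at Hh1_1_3
  simp (config := { maxSteps := 10000000 }) only [Phi, Fform, two, e_app,
    Fin.reduceEq, reduceIte, mul_zero, zero_mul, mul_one, one_mul,
    sub_zero, zero_sub, add_zero, zero_add, neg_zero, mul_neg, neg_neg,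
    sub_self] at Hh1_1_3
  have Hh1_1_4 := h1 1 4
  simp only [Fin.sum_univ_six] at Hh1_1_4
  simp (config := { maxSteps := 10000000 }) only [Phi, Fform, two, e_app,
    Fin.reduceEq, reduceIte, mul_zero, zero_mul, mul_one, one_mul,
    sub_zero, zero_sub, add_zero, zero_add, neg_zero, mul_neg, neg_neg,
    sub_self] at Hh1_1_4
  have Hh1_1_5 := h1 1 5
  simp only [Fin.sum_univ_six] at Hh1_1_5
  simp (config := { maxSteps := 10000000 }) only [Phi, Fform, two, e_app,
    Fin.reduceEq, reduceIte, mul_zero, zero_mul, mul_one, one_mul,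
    sub_zero, zero_sub, add_zero, zero_add, neg_zero, mul_neg, neg_neg,
    sub_self] at Hh1_1_5
  have Hh1_2_1 := h1 2 1
  simp only [Fin.sum_univ_six] at Hh1_2_1
  simp (config := { maxSteps := 10000000 }) only [Phi, Fform, two, e_app,
    Fin.reduceEq, reduceIte, mul_zero, zero_mul, mul_one, one_mul,
    sub_zero, zero_sub, add_zero, zero_add, neg_zero, mul_neg, neg_neg,
    sub_self] at Hh1_2_1
  have Hh1_2_2 := h1 2 2
  simp only [Fin.sum_univ_six] at Hh1_2_2
  simp (config := { maxSteps := 10000000 }) only [Phi, Fform, two, e_app,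
    Fin.reduceEq, reduceIte, mul_zero, zero_mul, mul_one, one_mul,
    sub_zero, zero_sub, add_zero, zero_add, neg_zero, mul_neg, neg_neg,
    sub_self] at Hh1_2_2
  have Hh1_2_4 := h1 2 4
  simp only [Fin.sum_univ_six] at Hh1_2_4
  simp (config := { maxSteps := 10000000 }) only [Phi, Fform, two, e_app,
    Fin.reduceEq, reduceIte, mul_zero, zero_mul, mul_one, one_mul,
    sub_zero, zero_sub, add_zero, zero_add, neg_zero, mul_neg, neg_neg,
    sub_self] at Hh1_2_4
  have Hh1_2_5 := h1 2 5
  simp only [Fin.sum_univ_six] at Hh1_2_5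
  simp (config := { maxSteps := 10000000 }) only [Phi, Fform, two, e_app,
    Fin.reduceEq, reduceIte, mul_zero, zero_mul, mul_one, one_mul,
    sub_zero, zero_sub, add_zero, zero_add, neg_zero, mul_neg, neg_neg,
    sub_self] at Hh1_2_5
  have Hh1_4_4 := h1 4 4
  simp only [Fin.sum_univ_six] at Hh1_4_4
  simp (config := { maxSteps := 10000000 }) only [Phi, Fform, two, e_app,
    Fin.reduceEq, reduceIte, mul_zero, zero_mul, mul_one, one_mul,
    sub_zero, zero_sub, add_zero, zero_add, neg_zero, mul_neg, neg_neg,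
    sub_self] at Hh1_4_4
  have Hh2_0 := h2 0
  simp only [Fin.sum_univ_six] at Hh2_0
  simp (config := { maxSteps := 10000000 }) only [Psip, three, e_app,
    Fin.reduceEq, reduceIte, mul_zero, zero_mul, mul_one, one_mul,
    sub_zero, zero_sub, add_zero, zero_add, neg_zero, mul_neg, neg_neg,
    sub_self] at Hh2_0
  have Hh3_0 := h3 0
  simp only [Fin.sum_univ_six] at Hh3_0
  simp (config := { maxSteps := 10000000 }) only [Psim, three, e_app,
    Fin.reduceEq, reduceIte, mul_zero, zero_mul, mul_one, one_mul,
    sub_zero, zero_sub, add_zero, zero_add, neg_zero, mul_neg, neg_neg,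
    sub_self] at Hh3_0
  have g0 : A ![e 0, e 1, e 2, e 3] = 0 := by
    linear_combination (-1/12 : ℝ) * Hh1_0_0 + (-1/12 : ℝ) * Hh1_2_2 + (1/12 : ℝ) * Hh1_4_4 + (1/12 : ℝ) * s0132 + (1/12 : ℝ) * s0154 + (1/12 : ℝ) * s0213 + (-1/12 : ℝ) * s0231 + (-1/12 : ℝ) * s0312 + (1/12 : ℝ) * s0321 + (1/12 : ℝ) * s0415 + (-1/12 : ℝ) * s0451 + (-1/12 : ℝ) * s0514 + (1/12 : ℝ) * s0541 + (-1/12 : ℝ) * s2013 + (1/12 : ℝ) * s2031 + (1/12 : ℝ) * s2103 + (-1/12 : ℝ) * s2130 + (-1/12 : ℝ) * s2301 + (1/12 : ℝ) * s2310 + (1/12 : ℝ) * s2354 + (1/12 : ℝ) * s2435 + (-1/12 : ℝ) * s2453 + (-1/12 : ℝ) * s2534 + (1/12 : ℝ) * s2543 + (1/12 : ℝ) * s4015 + (-1/12 : ℝ) * s4051 + (-1/12 : ℝ) * s4105 + (1/12 : ℝ) * s4150 + (1/12 : ℝ) * s4235 + (-1/12 : ℝ) * s4253 + (-1/12 : ℝ)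 * s4325 + (1/12 : ℝ) * s4352 + (1/12 : ℝ) * s4501 + (-1/12 : ℝ) * s4510 + (1/12 : ℝ) * s4523 + (-1/12 : ℝ) * s4532
  have g1 : A ![e 0, e 1, e 2, e 4] = 0 := by
    linear_combination (1/6 : ℝ) * Hh1_2_5 + (-1/6 : ℝ) * s2014 + (1/6 : ℝ) * s2041 + (1/6 : ℝ) * s2104 + (-1/6 : ℝ) * s2140 + (-1/6 : ℝ) * s2234 + (1/6 : ℝ) * s2243 + (1/6 : ℝ) * s2324 + (-1/6 : ℝ) * s2342 + (-1/6 : ℝ) * s2401 + (1/6 : ℝ) * s2410 + (-1/6 : ℝ) * s2423 + (1/6 : ℝ) * s2432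
  have g2 : A ![e 0, e 1, e 2, e 5] = 0 := by
    linear_combination (-1/6 : ℝ) * Hh1_2_4 + (-1/6 : ℝ) * s2015 + (1/6 : ℝ) * s2051 + (1/6 : ℝ) * s2105 + (-1/6 : ℝ) * s2150 + (-1/6 : ℝ) * s2235 + (1/6 : ℝ) * s2253 + (1/6 : ℝ) * s2325 + (-1/6 : ℝ) * s2352 + (-1/6 : ℝ) * s2501 + (1/6 : ℝ) * s2510 + (-1/6 : ℝ) * s2523 + (1/6 : ℝ) * s2532
  have g3 : A ![e 0, e 1, e 3, e 4] = 0 := by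
    linear_combination (1/6 : ℝ) * Hh2_0 + (1/6 : ℝ) * Hh1_2_4 + (1/6 : ℝ) * s0024 + (-1/6 : ℝ) * s0035 + (-1/6 : ℝ) * s0042 + (1/6 : ℝ) * s0053 + (1/6 : ℝ) * s0143 + (1/6 : ℝ) * s0152 + (-1/6 : ℝ) * s0204 + (1/6 : ℝ) * s0215 + (1/6 : ℝ) * s0240 + (-1/6 : ℝ) * s0251 + (1/6 : ℝ) * s0305 + (1/6 : ℝ) * s0314 + (-1/6 : ℝ) * s0341 + (-1/6 : ℝ) * s0350 + (1/6 : ℝ) * s0402 + (-1/6 : ℝ) * s0413 + (-1/6 : ℝ) * s0420 + (1/6 : ℝ) * s0431 + (-1/6 : ℝ) * s0503 + (-1/6 : ℝ) * s0512 + (1/6 : ℝ) * s0521 + (1/6 : ℝ) * s0530 + (1/6 : ℝ) * s2015 + (-1/6 : ℝ) * s2051 + (-1/6 : ℝ) * s2105 + (1/6 : ℝ) * s2150 + (1/6 : ℝ) * s2235 + (-1/6 : ℝ) * s2253 + (-1/6 : ℝ) * s2325 + (1/6 : ℝ) * s2352 + (1/6 : ℝ) * s2501 + (-1/6 : ℝ)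 * s2510 + (1/6 : ℝ) * s2523 + (-1/6 : ℝ) * s2532
  have g4 : A ![e 0, e 1, e 3, e 5] = 0 := by
    linear_combination (1/6 : ℝ) * Hh3_0 + (1/6 : ℝ) * Hh1_2_5 + (1/6 : ℝ) * s0025 + (1/6 : ℝ) * s0034 + (-1/6 : ℝ) * s0043 + (-1/6 : ℝ) * s0052 + (-1/6 : ℝ) * s0142 + (1/6 : ℝ) * s0153 + (-1/6 : ℝ) * s0205 + (-1/6 : ℝ) * s0214 + (1/6 : ℝ) * s0241 + (1/6 : ℝ) * s0250 + (-1/6 : ℝ) * s0304 + (1/6 : ℝ) * s0315 + (1/6 : ℝ) * s0340 + (-1/6 : ℝ) * s0351 + (1/6 : ℝ) * s0403 + (1/6 : ℝ) * s0412 + (-1/6 : ℝ) * s0421 + (-1/6 : ℝ) * s0430 + (1/6 : ℝ) * s0502 + (-1/6 : ℝ) * s0513 + (-1/6 : ℝ) * s0520 + (1/6 : ℝ) * s0531 + (-1/6 : ℝ) * s2014 + (1/6 : ℝ) * s2041 + (1/6 : ℝ) * s2104 + (-1/6 : ℝ) * s2140 + (-1/6 : ℝ) * s2234 + (1/6 :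 ℝ) * s2243 + (1/6 : ℝ) * s2324 + (-1/6 : ℝ) * s2342 + (-1/6 : ℝ) * s2401 + (1/6 : ℝ) * s2410 + (-1/6 : ℝ) * s2423 + (1/6 : ℝ) * s2432
  have g5 : A ![e 0, e 1, e 4, e 5] = 0 := by
    linear_combination (-1/12 : ℝ) * Hh1_0_0 + (1/12 : ℝ) * Hh1_2_2 + (-1/12 : ℝ) * Hh1_4_4 + (1/12 : ℝ) * s0132 + (1/12 : ℝ) * s0154 + (1/12 : ℝ) * s0213 + (-1/12 : ℝ) * s0231 + (-1/12 : ℝ) * s0312 + (1/12 : ℝ) * s0321 + (1/12 : ℝ) * s0415 + (-1/12 : ℝ) * s0451 + (-1/12 : ℝ) * s0514 + (1/12 : ℝ) * s0541 + (1/12 : ℝ) * s2013 + (-1/12 : ℝ) * s2031 + (-1/12 : ℝ) * s2103 + (1/12 : ℝ) * s2130 + (1/12 : ℝ) * s2301 + (-1/12 : ℝ) * s2310 + (-1/12 : ℝ) * s2354 + (-1/12 : ℝ) * s2435 + (1/12 : ℝ) * s2453 + (1/12 : ℝ) * s2534 + (-1/12 : ℝ) * s2543 + (-1/12 : ℝ)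 * s4015 + (1/12 : ℝ) * s4051 + (1/12 : ℝ) * s4105 + (-1/12 : ℝ) * s4150 + (-1/12 : ℝ) * s4235 + (1/12 : ℝ) * s4253 + (1/12 : ℝ) * s4325 + (-1/12 : ℝ) * s4352 + (-1/12 : ℝ) * s4501 + (1/12 : ℝ) * s4510 + (-1/12 : ℝ) * s4523 + (1/12 : ℝ) * s4532
  have g6 : A ![e 0, e 2, e 3, e 4] = 0 := by
    linear_combination (1/6 : ℝ) * Hh1_0_5 + (-1/6 : ℝ) * s0014 + (1/6 : ℝ) * s0041 + (1/6 : ℝ) * s0104 + (-1/6 : ℝ) * s0140 + (1/6 : ℝ) * s0243 + (1/6 : ℝ) * s0324 + (-1/6 : ℝ) * s0342 + (-1/6 : ℝ) * s0401 + (1/6 : ℝ) * s0410 + (-1/6 : ℝ) * s0423 + (1/6 : ℝ) * s0432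
  have g7 : A ![e 0, e 2, e 3, e 5] = 0 := by
    linear_combination (-1/6 : ℝ) * Hh1_0_4 + (-1/6 : ℝ) * s0015 + (1/6 : ℝ) * s0051 + (1/6 : ℝ) * s0105 + (-1/6 : ℝ) * s0150 + (1/6 : ℝ) * s0253 + (1/6 : ℝ) * s0325 + (-1/6 : ℝ) * s0352 + (-1/6 : ℝ) * s0501 + (1/6 : ℝ) * s0510 + (-1/6 : ℝ) * s0523 + (1/6 : ℝ) * s0532
  have g8 : A ![e 0, e 2, e 4, e 5] = 0 := by
    linear_combination (-1/6 : ℝ) * Hh1_2_1 + (1/6 : ℝ) * s2023 + (-1/6 : ℝ) * s2032 + (1/6 : ℝ) * s2045 + (-1/6 : ℝ) * s2054 + (-1/6 : ℝ) * s2203 + (1/6 : ℝ) * s2230 + (1/6 : ℝ) * s2302 + (-1/6 : ℝ) * s2320 + (-1/6 : ℝ) * s2405 + (1/6 : ℝ) * s2450 + (1/6 : ℝ) * s2504 + (-1/6 : ℝ) * s2540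
  have g9 : A ![e 0, e 3, e 4, e 5] = 0 := by
    linear_combination (-1/6 : ℝ) * Hh1_0_2 + (-1/6 : ℝ) * s0013 + (1/6 : ℝ) * s0031 + (1/6 : ℝ) * s0103 + (-1/6 : ℝ) * s0130 + (-1/6 : ℝ) * s0301 + (1/6 : ℝ) * s0310 + (1/6 : ℝ) * s0354 + (1/6 : ℝ) * s0435 + (-1/6 : ℝ) * s0453 + (-1/6 : ℝ) * s0534 + (1/6 : ℝ) * s0543
  have g10 : A ![e 1, e 2, e 3, e 4] = 0 := by
    linear_combination (1/6 : ℝ) * Hh1_1_5 + (-1/6 : ℝ) * s1014 + (1/6 : ℝ) * s1041 + (1/6 : ℝ) * s1104 + (-1/6 : ℝ) * s1140 + (1/6 : ℝ) * s1243 + (1/6 : ℝ) * s1324 + (-1/6 : ℝ) * s1342 + (-1/6 : ℝ) * s1401 + (1/6 : ℝ) * s1410 + (-1/6 : ℝ) * s1423 + (1/6 : ℝ) * s1432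
  have g11 : A ![e 1, e 2, e 3, e 5] = 0 := by
    linear_combination (-1/6 : ℝ) * Hh1_1_4 + (-1/6 : ℝ) * s1015 + (1/6 : ℝ) * s1051 + (1/6 : ℝ) * s1105 + (-1/6 : ℝ) * s1150 + (1/6 : ℝ) * s1253 + (1/6 : ℝ) * s1325 + (-1/6 : ℝ) * s1352 + (-1/6 : ℝ) * s1501 + (1/6 : ℝ) * s1510 + (-1/6 : ℝ) * s1523 + (1/6 : ℝ) * s1532
  have g12 : A ![e 1, e 2, e 4, e 5] = 0 := by
    linear_combination (1/6 : ℝ) * Hh1_1_3 + (-1/6 : ℝ) * s1012 + (1/6 : ℝ) * s1021 + (1/6 : ℝ) * s1102 + (-1/6 : ℝ) * s1120 + (-1/6 : ℝ) * s1201 + (1/6 : ℝ) * s1210 + (1/6 : ℝ) * s1254 + (1/6 : ℝ) * s1425 + (-1/6 : ℝ) * s1452 + (-1/6 : ℝ) * s1524 + (1/6 : ℝ) * s1542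
  have g13 : A ![e 1, e 3, e 4, e 5] = 0 := by
    linear_combination (-1/6 : ℝ) * Hh1_1_2 + (-1/6 : ℝ) * s1013 + (1/6 : ℝ) * s1031 + (1/6 : ℝ) * s1103 + (-1/6 : ℝ) * s1130 + (-1/6 : ℝ) * s1301 + (1/6 : ℝ) * s1310 + (1/6 : ℝ) * s1354 + (1/6 : ℝ) * s1435 + (-1/6 : ℝ) * s1453 + (-1/6 : ℝ) * s1534 + (1/6 : ℝ) * s1543
  have g14 : A ![e 2, e 3, e 4, e 5] = 0 := by
    linear_combination (1/12 : ℝ) * Hh1_0_0 + (-1/12 : ℝ) * Hh1_2_2 + (-1/12 : ℝ) * Hh1_4_4 + (-1/12 : ℝ) * s0132 + (-1/12 : ℝ) * s0154 + (-1/12 : ℝ) * s0213 + (1/12 : ℝ) * s0231 + (1/12 : ℝ) * s0312 + (-1/12 : ℝ) * s0321 + (-1/12 : ℝ) * s0415 + (1/12 : ℝ) * s0451 + (1/12 : ℝ) * s0514 + (-1/12 : ℝ) * s0541 + (-1/12 : ℝ) * s2013 + (1/12 : ℝ) * s2031 + (1/12 : ℝ) * s2103 + (-1/12 : ℝ) *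 s2130 + (-1/12 : ℝ) * s2301 + (1/12 : ℝ) * s2310 + (1/12 : ℝ) * s2354 + (1/12 : ℝ) * s2435 + (-1/12 : ℝ) * s2453 + (-1/12 : ℝ) * s2534 + (1/12 : ℝ) * s2543 + (-1/12 : ℝ) * s4015 + (1/12 : ℝ) * s4051 + (1/12 : ℝ) * s4105 + (-1/12 : ℝ) * s4150 + (-1/12 : ℝ) * s4235 + (1/12 : ℝ) * s4253 + (1/12 : ℝ) * s4325 + (-1/12 : ℝ) * s4352 + (-1/12 : ℝ) * s4501 + (1/12 : ℝ) * s4510 + (-1/12 : ℝ) * s4523 + (1/12 : ℝ) * s4532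
  have key : ∀ i j k l : Fin 6, i < j → j < k → k < l → A ![e i, e j, e k, e l] = 0 := by
    intro i j k l hij hjk hkl
    fin_cases i <;> fin_cases j <;>
      first
      | exact absurd hij (by decide)
      | (fin_cases k <;>
          first
          | exact absurd hjk (by decide)
          | (fin_cases l <;>
              first
              | exact absurd hkl (by decide)
              | assumption))
  refine Module.Basis.ext_alternating (Pi.basisFun ℝ (Fin 6)) (fun v hv => ?_)
  have hb : ∀ i : Fin 6, (Pi.basisFun ℝ (Fin 6)) i = e i := by
    intro i; funext j; simp [e, Pi.basisFun_apply, Pi.single_apply]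
  simp only [hb, AlternatingMap.zero_apply]
  set σ := Tuple.sort v with hσ
  have hmono : Monotone (v ∘ σ) := Tuple.monotone_sort v
  have hsm : StrictMono (v ∘ σ) := hmono.strictMono_of_injective (hv.comp σ.injective)
  have hcomp : (fun i => e (v i)) = (fun i => e ((v ∘ σ) i)) ∘ ⇑(σ⁻¹) := by
    funext m; simp
  rw [hcomp, A.map_perm (fun i => e ((v ∘ σ) i)) σ⁻¹]
  have hz : A (fun i => e ((v ∘ σ) i)) = 0 := by
    have h01 : (v ∘ σ) 0 < (v ∘ σ) 1 := hsm (by decide)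
    have h12 : (v ∘ σ) 1 < (v ∘ σ) 2 := hsm (by decide)
    have h23 : (v ∘ σ) 2 < (v ∘ σ) 3 := hsm (by decide)
    have hm : (fun i => e ((v ∘ σ) i)) = ![e ((v ∘ σ) 0), e ((v ∘ σ) 1), e ((v ∘ σ) 2), e ((v ∘ σ) 3)] := by
      funext m; fin_cases m <;> rfl
    rw [hm]
    exact key _ _ _ _ h01 h12 h23
  rw [hz, smul_zero]
end
end

section
/- On the Lie algebra n_t (for every real t ≠ 0), the Nijenhuis tensor of J vanishes identically, N(X,Y) = 0 for all X,Y (so J is integrable), and the Chevalley–Eilenberg differentials of Θ⁺ and Θ⁻ vanish: dΘ⁺ = 0 and dΘ⁻ = 0 as alternating 4-forms. -/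
open scoped BigOperators

noncomputable section

/-- The Lie bracket of 𝔫_t: [e₁,e₂] = 2t·e₆, [e₃,e₄] = −2t·e₆ (bilinear extension). -/
def brN (t : ℝ) (X Y : Fin 6 → ℝ) : Fin 6 → ℝ :=
  (2 * t * two 0 1 X Y - 2 * t * two 2 3 X Y) • e 5

/-- The torsion 3-form T = −2t(e₁₂₆ − e₃₄₆) on 𝔫_t. -/
def TN (t : ℝ) (X Y Z : Fin 6 → ℝ) : ℝ :=
  -2 * t * (three 0 1 5 X Y Z - three 2 3 5 X Y Z)

/-- on 𝔫_t (t ≠ 0): N ≡ 0 and dΘ⁺ = dΘ⁻ = 0. -/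
theorem stmt3 (t : ℝ) (ht : t ≠ 0) :
    (∀ X Y : Fin 6 → ℝ, Nij (brN t) X Y = 0) ∧
    (∀ X Y Z W : Fin 6 → ℝ, d3 (brN t) Thp X Y Z W = 0) ∧
    (∀ X Y Z W : Fin 6 → ℝ, d3 (brN t) Thm X Y Z W = 0) := by
  have h5 : ∀ a b c d f g : ℝ, ![a,b,c,d,f,g] 5 = g := fun _ _ _ _ _ _ => rfl
  have n0 : (0:Fin 6) ≠ 5 := by decide
  have n1 : (1:Fin 6) ≠ 5 := by decide
  have n2 : (2:Fin 6) ≠ 5 := by decide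
  have n3 : (3:Fin 6) ≠ 5 := by decide
  have n4 : (4:Fin 6) ≠ 5 := by decide
  refine ⟨fun X Y => ?_, fun X Y Z W => ?_, fun X Y Z W => ?_⟩
  · funext m
    simp only [Nij, brN, Jc, two, e, Pi.sub_apply, Pi.smul_apply, smul_eq_mul]
    fin_cases m <;> simp [h5] <;> ring
  · simp only [d3, brN, Thp, three, two, e, Pi.smul_apply, smul_eq_mul,
      if_neg n0, if_neg n1, if_neg n2, if_neg n3, if_neg n4, if_pos rfl]
    ring
  · simp only [d3, brN, Thm, three, two, e, Pi.smul_apply, smul_eq_mul,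
      if_neg n0, if_neg n1, if_neg n2, if_neg n3, if_neg n4, if_pos rfl]
    ring
end
end

section
/- On the Lie algebra n_t (for every real t ≠ 0), let ∇ be the torsion connection associated with the 3-form T = −2t(e₁₂₆ − e₃₄₆). Then: (1) ∇_X(JY) = J(∇_X Y) for all X,Y (∇J = 0); (2) ∇Θ⁺ = 0 and ∇Θ⁻ = 0; (3) the torsion of ∇ satisfies g(∇_X Y − ∇_Y X − [X,Y], Z) = T(X,Y,Z) for all X,Y,Z; (4) the Lee form vanishes: θ(X) = −½ Σᵢ T(JX, eᵢ, Jeᵢ) = 0 for all X (the Hermitian structure is balanced). -/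
open scoped BigOperators

set_option maxHeartbeats 4000000
noncomputable section

lemma Jc0 (X : Fin 6 → ℝ) : Jc X 0 = -X 1 := rfl
lemma Jc1 (X : Fin 6 → ℝ) : Jc X 1 = X 0 := rfl
lemma Jc2 (X : Fin 6 → ℝ) : Jc X 2 = -X 3 := rfl
lemma Jc3 (X : Fin 6 → ℝ) : Jc X 3 = X 2 := rfl
lemma Jc4 (X : Fin 6 → ℝ) : Jc X 4 = -X 5 := rfl
lemma Jc5 (X : Fin 6 → ℝ) : Jc X 5 = X 4 := rfl

lemma nab_eq (t : ℝ) (X Y : Fin 6 → ℝ) :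
    nab (brN t) (TN t) X Y =
      fun m => 2*t*X 5 * (if m = 0 then Y 1 else if m = 1 then -Y 0
        else if m = 2 then -Y 3 else if m = 3 then Y 2 else 0) := by
  funext m
  fin_cases m <;>
    simp [nab, brN, TN, gIP, two, three, e, Fin.sum_univ_six] <;> ring

/-- on 𝔫_t (t ≠ 0), the torsion connection ∇ of T = −2t(e₁₂₆ − e₃₄₆) satisfies
∇J = 0, ∇Θ⁺ = ∇Θ⁻ = 0, has torsion T, and the Lee form vanishes. -/
theorem stmt4 (t : ℝ) (ht : t ≠ 0) :
    (∀ X Y : Fin 6 → ℝ, nab (brN t) (TN t) X (Jc Y) = Jc (nab (brN t) (TN t) X Y)) ∧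
    (∀ X Y Z V : Fin 6 → ℝ, nabForm3 (brN t) (TN t) Thp X Y Z V = 0) ∧
    (∀ X Y Z V : Fin 6 → ℝ, nabForm3 (brN t) (TN t) Thm X Y Z V = 0) ∧
    (∀ X Y Z : Fin 6 → ℝ,
      gIP (nab (brN t) (TN t) X Y - nab (brN t) (TN t) Y X - brN t X Y) Z = TN t X Y Z) ∧
    (∀ X : Fin 6 → ℝ, -(1/2) * ∑ i, TN t (Jc X) (e i) (Jc (e i)) = 0) := by
  refine ⟨?_, ?_, ?_, ?_, ?_⟩
  · intro X Y
    funext m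
    fin_cases m <;> simp [nab_eq, Jc0, Jc1, Jc2, Jc3, Jc4, Jc5]
  · intro X Y Z V
    simp only [nabForm3, Thp, three, nab_eq, Fin.reduceEq, reduceIte]
    ring
  · intro X Y Z V
    simp only [nabForm3, Thm, three, nab_eq, Fin.reduceEq, reduceIte]
    ring
  · intro X Y Z
    simp [gIP, nab_eq, brN, TN, two, three, e, Fin.sum_univ_six]
    ring
  · intro X
    simp [TN, three, e, Jc0, Jc1, Jc2, Jc3, Jc4, Jc5, Fin.sum_univ_six]
end
end

section
/- On the Lie algebra n_t (for every real t ≠ 0), the curvature R of the torsion connection ∇ associated with T = −2t(e₁₂₆ − e₃₄₆) is an SU(3)-instanton: for all X,Y,Z,V, (1) R(X,Y,Z,V) = R(Z,V,X,Y); (2) R(JX,JY,Z,V) = R(X,Y,Z,V); (3) Σᵢ R(eᵢ, Jeᵢ, Z, V) = 0 (sum over i = 1,…,6). -/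
open scoped BigOperators
noncomputable section
lemma nab0 (t : ℝ) (X Y : Fin 6 → ℝ) :
    nab (brN t) (TN t) X Y 0 = 2*t*(X 5 * Y 1) := by
  simp [nab, gIP, brN, TN, two, three, e, Fin.sum_univ_six]
  try ring
lemma nab1 (t : ℝ) (X Y : Fin 6 → ℝ) :
    nab (brN t) (TN t) X Y 1 = -(2*t*(X 5 * Y 0)) := by
  simp [nab, gIP, brN, TN, two, three, e, Fin.sum_univ_six]
  try ring
lemma nab2 (t : ℝ) (X Y : Fin 6 → ℝ) :
    nab (brN t) (TN t) X Y 2 = -(2*t*(X 5 * Y 3)) := by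
  simp [nab, gIP, brN, TN, two, three, e, Fin.sum_univ_six]
  try ring
lemma nab3 (t : ℝ) (X Y : Fin 6 → ℝ) :
    nab (brN t) (TN t) X Y 3 = 2*t*(X 5 * Y 2) := by
  simp [nab, gIP, brN, TN, two, three, e, Fin.sum_univ_six]
  try ring
lemma nab4 (t : ℝ) (X Y : Fin 6 → ℝ) :
    nab (brN t) (TN t) X Y 4 = 0 := by
  simp [nab, gIP, brN, TN, two, three, e, Fin.sum_univ_six]
  try ring
lemma nab5 (t : ℝ) (X Y : Fin 6 → ℝ) :
    nab (brN t) (TN t) X Y 5 = 0 := by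
  simp [nab, gIP, brN, TN, two, three, e, Fin.sum_univ_six]
  try ring
lemma R4_eq (t : ℝ) (X Y Z V : Fin 6 → ℝ) :
    R4 (brN t) (TN t) X Y Z V =
      4*t^2 * ((X 0 * Y 1 - X 1 * Y 0) - (X 2 * Y 3 - X 3 * Y 2)) *
        ((Z 0 * V 1 - Z 1 * V 0) - (Z 2 * V 3 - Z 3 * V 2)) := by
  simp only [R4, Rmap, gIP, Fin.sum_univ_six, Pi.sub_apply, nab0, nab1, nab2, nab3, nab4, nab5]
  simp [brN, two, e]
  try ring
/-- on 𝔫_t (t ≠ 0), the curvature of the torsion connection is an SU(3)-instanton. -/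
theorem stmt6 (t : ℝ) (ht : t ≠ 0) :
    (∀ X Y Z V : Fin 6 → ℝ, R4 (brN t) (TN t) X Y Z V = R4 (brN t) (TN t) Z V X Y) ∧
    (∀ X Y Z V : Fin 6 → ℝ, R4 (brN t) (TN t) (Jc X) (Jc Y) Z V = R4 (brN t) (TN t) X Y Z V) ∧
    (∀ Z V : Fin 6 → ℝ, ∑ i, R4 (brN t) (TN t) (e i) (Jc (e i)) Z V = 0) := by
  refine ⟨fun X Y Z V => ?_, fun X Y Z V => ?_, fun Z V => ?_⟩
  · rw [R4_eq, R4_eq]; ring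
  · rw [R4_eq, R4_eq]
    simp only [Jc, Matrix.cons_val_zero, Matrix.cons_val_one, Matrix.head_cons,
      Matrix.cons_val_two, Matrix.tail_cons, Matrix.cons_val_three]
    ring
  · simp only [Fin.sum_univ_six, R4_eq]
    simp [Jc, e]
end
end

section
/- On the Lie algebra s^δ_{r,t} (δ = ±1, r ≠ 0, t ≠ 0 real), the Nijenhuis tensor of J vanishes identically, N(X,Y) = 0 for all X,Y (so J is integrable), and the Chevalley–Eilenberg differentials of Θ⁺ and Θ⁻ vanish: dΘ⁺ = 0 and dΘ⁻ = 0 as alternating 4-forms. -/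
open scoped BigOperators

noncomputable section

/-- The Lie bracket of s^δ_{r,t}: [e₂,e₅]=(2/t)e₁, [e₁,e₅]=−(2/t)e₂, [e₄,e₅]=−(2/t)e₃,
[e₃,e₅]=(2/t)e₄, [e₁,e₂]=(2δt/r²)e₆, [e₃,e₄]=−(2δt/r²)e₆ (bilinear extension). -/
def brS (δ r t : ℝ) (X Y : Fin 6 → ℝ) : Fin 6 → ℝ :=
  ((2 / t) * two 1 4 X Y) • e 0 + (-(2 / t) * two 0 4 X Y) • e 1
    + (-(2 / t) * two 3 4 X Y) • e 2 + ((2 / t) * two 2 4 X Y) • e 3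
    + ((2 * δ * t / r ^ 2) * two 0 1 X Y - (2 * δ * t / r ^ 2) * two 2 3 X Y) • e 5

/-- The torsion 3-form T = −(2δt/r²)(e₁₂₆ − e₃₄₆) on s^δ_{r,t}. -/
def TS (δ r t : ℝ) (X Y Z : Fin 6 → ℝ) : ℝ :=
  -(2 * δ * t / r ^ 2) * (three 0 1 5 X Y Z - three 2 3 5 X Y Z)

lemma v0 (a b c d f g : ℝ) : ![a,b,c,d,f,g] (0 : Fin 6) = a := rfl
lemma v1 (a b c d f g : ℝ) : ![a,b,c,d,f,g] (1 : Fin 6) = b := rfl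
lemma v2 (a b c d f g : ℝ) : ![a,b,c,d,f,g] (2 : Fin 6) = c := rfl
lemma v3 (a b c d f g : ℝ) : ![a,b,c,d,f,g] (3 : Fin 6) = d := rfl
lemma v4 (a b c d f g : ℝ) : ![a,b,c,d,f,g] (4 : Fin 6) = f := rfl
lemma v5 (a b c d f g : ℝ) : ![a,b,c,d,f,g] (5 : Fin 6) = g := rfl

lemma w0 (a b c d f g : ℝ) (h : 0 < 6) : ![a,b,c,d,f,g] ⟨0,h⟩ = a := rfl
lemma w1 (a b c d f g : ℝ) (h : 1 < 6) : ![a,b,c,d,f,g] ⟨1,h⟩ = b := rfl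
lemma w2 (a b c d f g : ℝ) (h : 2 < 6) : ![a,b,c,d,f,g] ⟨2,h⟩ = c := rfl
lemma w3 (a b c d f g : ℝ) (h : 3 < 6) : ![a,b,c,d,f,g] ⟨3,h⟩ = d := rfl
lemma w4 (a b c d f g : ℝ) (h : 4 < 6) : ![a,b,c,d,f,g] ⟨4,h⟩ = f := rfl
lemma w5 (a b c d f g : ℝ) (h : 5 < 6) : ![a,b,c,d,f,g] ⟨5,h⟩ = g := rfl

lemma brS_eq (δ r t : ℝ) (X Y : Fin 6 → ℝ) :
    brS δ r t X Y = ![(2 / t) * two 1 4 X Y, -(2 / t) * two 0 4 X Y,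
      -(2 / t) * two 3 4 X Y, (2 / t) * two 2 4 X Y, 0,
      (2 * δ * t / r ^ 2) * two 0 1 X Y - (2 * δ * t / r ^ 2) * two 2 3 X Y] := by
  funext m
  fin_cases m <;>
    simp [brS, e, Pi.add_apply, Pi.smul_apply, v0, v1, v2, v3, v4, v5]

set_option maxHeartbeats 2000000 in
/-- on s^δ_{r,t} (δ = ±1, r ≠ 0, t ≠ 0): N ≡ 0 and dΘ⁺ = dΘ⁻ = 0. -/
theorem stmt7 (δ r t : ℝ) (hδ : δ = 1 ∨ δ = -1) (hr : r ≠ 0) (ht : t ≠ 0) :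
    (∀ X Y : Fin 6 → ℝ, Nij (brS δ r t) X Y = 0) ∧
    (∀ X Y Z W : Fin 6 → ℝ, d3 (brS δ r t) Thp X Y Z W = 0) ∧
    (∀ X Y Z W : Fin 6 → ℝ, d3 (brS δ r t) Thm X Y Z W = 0) := by
  refine ⟨fun X Y => ?_, fun X Y Z W => ?_, fun X Y Z W => ?_⟩
  · funext m
    fin_cases m <;>
      · simp only [Nij, brS_eq, Jc, two, Pi.sub_apply, Pi.zero_apply,
          Fin.isValue, v0, v1, v2, v3, v4, v5, w0, w1, w2, w3, w4, w5]
        ring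
  · simp only [d3, Thp, three, brS_eq, two, v0, v1, v2, v3, v4, v5]
    ring
  · simp only [d3, Thm, three, brS_eq, two, v0, v1, v2, v3, v4, v5]
    ring
end
end

section
/- On the Lie algebra s^δ_{r,t} (δ = ±1, r ≠ 0, t ≠ 0 real), the torsion 3-form T = −(2δt/r²)(e₁₂₆ − e₃₄₆) is parallel with respect to its torsion connection ∇: (∇_X T)(Y,Z,V) = 0 for all X,Y,Z,V. -/
open scoped BigOperators

noncomputable section

lemma nab_brS (δ r t : ℝ) (X Y : Fin 6 → ℝ) :
    nab (brS δ r t) (TS δ r t) X Y =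
      fun m => ((2 * δ * t / r ^ 2) * X 5 - (2 / t) * X 4) *
        (if m = 0 then Y 1 else if m = 1 then -Y 0 else if m = 2 then -Y 3
          else if m = 3 then Y 2 else 0) := by
  funext m
  fin_cases m <;>
  · simp [nab, brS, TS, gIP, two, three, e, Fin.sum_univ_six]
    ring

set_option maxHeartbeats 1600000 in
/-- on s^δ_{r,t}, the torsion T = −(2δt/r²)(e₁₂₆ − e₃₄₆) is ∇-parallel. -/
theorem stmt9 (δ r t : ℝ) (hδ : δ = 1 ∨ δ = -1) (hr : r ≠ 0) (ht : t ≠ 0) :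
    ∀ X Y Z V : Fin 6 → ℝ, nabForm3 (brS δ r t) (TS δ r t) (TS δ r t) X Y Z V = 0 := by
  intro X Y Z V
  simp only [nabForm3, nab_brS, TS, three, Fin.reduceEq, reduceIte]
  ring
end
end

section
/- On the Lie algebra g_t (for every real t ≠ 0), the curvature R of the torsion connection ∇ associated with T = −(1/t)(3e₁₃₅ + e₁₄₆ + e₂₃₆ + e₂₄₅) is an SU(3)-instanton: for all X,Y,Z,V, (1) R(X,Y,Z,V) = R(Z,V,X,Y); (2) R(JX,JY,Z,V) = R(X,Y,Z,V); (3) Σᵢ R(eᵢ, Jeᵢ, Z, V) = 0 (sum over i = 1,…,6). -/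
open scoped BigOperators

noncomputable section

/-- The Lie bracket of g_t (so(3,1) underlying sl(2,ℂ)), bilinear extension of
[e₃,e₅]=−(1/t)e₁, [e₄,e₆]=(1/t)e₁, [e₃,e₆]=−(1/t)e₂, [e₄,e₅]=−(1/t)e₂,
[e₁,e₅]=(1/t)e₃, [e₂,e₆]=−(1/t)e₃, [e₁,e₆]=(1/t)e₄, [e₂,e₅]=(1/t)e₄,
[e₁,e₃]=−(1/t)e₅, [e₂,e₄]=(1/t)e₅, [e₁,e₄]=−(1/t)e₆, [e₂,e₃]=−(1/t)e₆. -/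
def brG (t : ℝ) (X Y : Fin 6 → ℝ) : Fin 6 → ℝ :=
  (-(1 / t) * two 2 4 X Y + (1 / t) * two 3 5 X Y) • e 0
    + (-(1 / t) * two 2 5 X Y + -(1 / t) * two 3 4 X Y) • e 1
    + ((1 / t) * two 0 4 X Y + -(1 / t) * two 1 5 X Y) • e 2
    + ((1 / t) * two 0 5 X Y + (1 / t) * two 1 4 X Y) • e 3
    + (-(1 / t) * two 0 2 X Y + (1 / t) * two 1 3 X Y) • e 4
    + (-(1 / t) * two 0 3 X Y + -(1 / t) * two 1 2 X Y) • e 5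

/-- The torsion 3-form T = −(1/t)(3e₁₃₅ + e₁₄₆ + e₂₃₆ + e₂₄₅) on g_t. -/
def TG (t : ℝ) (X Y Z : Fin 6 → ℝ) : ℝ :=
  -(1 / t) * (3 * three 0 2 4 X Y Z + three 0 3 5 X Y Z
    + three 1 2 5 X Y Z + three 1 3 4 X Y Z)

/-- Closed form of the torsion connection on g_t. -/
def nabE (t : ℝ) (X Y : Fin 6 → ℝ) : Fin 6 → ℝ :=
  (-(2 / t) * (X 2 * Y 4 - X 4 * Y 2)) • e 0
    + (-(2 / t) * (X 2 * Y 5 - X 4 * Y 3)) • e 1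
    + ((2 / t) * (X 0 * Y 4 - X 4 * Y 0)) • e 2
    + ((2 / t) * (X 0 * Y 5 - X 4 * Y 1)) • e 3
    + (-(2 / t) * (X 0 * Y 2 - X 2 * Y 0)) • e 4
    + (-(2 / t) * (X 0 * Y 3 - X 2 * Y 1)) • e 5

set_option maxHeartbeats 4000000 in
lemma nab_eq_s14 (t : ℝ) (X Y : Fin 6 → ℝ) : nab (brG t) (TG t) X Y = nabE t X Y := by
  have h0 : nab (brG t) (TG t) X Y 0 = nabE t X Y 0 := by
    simp only [nab, nabE, brG, TG, gIP, two, three, e, Fin.sum_univ_six, Pi.add_apply,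
      Pi.smul_apply, smul_eq_mul, Fin.isValue, Fin.reduceEq, reduceIte, if_true,
      mul_one, mul_zero, zero_mul, one_mul, add_zero, zero_add, sub_zero, zero_sub, neg_zero]
    ring
  have h1 : nab (brG t) (TG t) X Y 1 = nabE t X Y 1 := by
    simp only [nab, nabE, brG, TG, gIP, two, three, e, Fin.sum_univ_six, Pi.add_apply,
      Pi.smul_apply, smul_eq_mul, Fin.isValue, Fin.reduceEq, reduceIte, if_true,
      mul_one, mul_zero, zero_mul, one_mul, add_zero, zero_add, sub_zero, zero_sub, neg_zero]
    ring
  have h2 : nab (brG t) (TG t) X Y 2 = nabE t X Y 2 := by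
    simp only [nab, nabE, brG, TG, gIP, two, three, e, Fin.sum_univ_six, Pi.add_apply,
      Pi.smul_apply, smul_eq_mul, Fin.isValue, Fin.reduceEq, reduceIte, if_true,
      mul_one, mul_zero, zero_mul, one_mul, add_zero, zero_add, sub_zero, zero_sub, neg_zero]
    ring
  have h3 : nab (brG t) (TG t) X Y 3 = nabE t X Y 3 := by
    simp only [nab, nabE, brG, TG, gIP, two, three, e, Fin.sum_univ_six, Pi.add_apply,
      Pi.smul_apply, smul_eq_mul, Fin.isValue, Fin.reduceEq, reduceIte, if_true,
      mul_one, mul_zero, zero_mul, one_mul, add_zero, zero_add, sub_zero, zero_sub, neg_zero]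
    ring
  have h4 : nab (brG t) (TG t) X Y 4 = nabE t X Y 4 := by
    simp only [nab, nabE, brG, TG, gIP, two, three, e, Fin.sum_univ_six, Pi.add_apply,
      Pi.smul_apply, smul_eq_mul, Fin.isValue, Fin.reduceEq, reduceIte, if_true,
      mul_one, mul_zero, zero_mul, one_mul, add_zero, zero_add, sub_zero, zero_sub, neg_zero]
    ring
  have h5 : nab (brG t) (TG t) X Y 5 = nabE t X Y 5 := by
    simp only [nab, nabE, brG, TG, gIP, two, three, e, Fin.sum_univ_six, Pi.add_apply,
      Pi.smul_apply, smul_eq_mul, Fin.isValue, Fin.reduceEq, reduceIte, if_true,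
      mul_one, mul_zero, zero_mul, one_mul, add_zero, zero_add, sub_zero, zero_sub, neg_zero]
    ring
  funext m
  fin_cases m
  · exact h0
  · exact h1
  · exact h2
  · exact h3
  · exact h4
  · exact h5

set_option maxHeartbeats 4000000 in
/-- on g_t (t ≠ 0), the curvature of the torsion connection is an SU(3)-instanton. -/
theorem stmt14 (t : ℝ) (ht : t ≠ 0) :
    (∀ X Y Z V : Fin 6 → ℝ, R4 (brG t) (TG t) X Y Z V = R4 (brG t) (TG t) Z V X Y) ∧
    (∀ X Y Z V : Fin 6 → ℝ, R4 (brG t) (TG t) (Jc X) (Jc Y) Z V = R4 (brG t) (TG t) X Y Z V) ∧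
    (∀ Z V : Fin 6 → ℝ, ∑ i, R4 (brG t) (TG t) (e i) (Jc (e i)) Z V = 0) := by
  refine ⟨?_, ?_, ?_⟩
  · intro X Y Z V
    simp only [R4, Rmap, nab_eq_s14]
    simp only [gIP, nabE, brG, two, e, Fin.sum_univ_six, Pi.add_apply, Pi.sub_apply,
      Pi.smul_apply, smul_eq_mul, Fin.isValue, Fin.reduceEq, reduceIte, if_true,
      mul_one, mul_zero, zero_mul, one_mul, add_zero, zero_add, sub_zero, zero_sub, neg_zero]
    ring
  · intro X Y Z V
    simp only [R4, Rmap, nab_eq_s14]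
    simp only [gIP, nabE, brG, two, e, Jc0, Jc1, Jc2, Jc3, Jc4, Jc5, Fin.sum_univ_six, Pi.add_apply, Pi.sub_apply,
      Pi.smul_apply, smul_eq_mul, Fin.isValue, Fin.reduceEq, reduceIte, if_true, neg_neg,
      mul_one, mul_zero, zero_mul, one_mul, add_zero, zero_add, sub_zero, zero_sub, neg_zero]
    ring
  · intro Z V
    simp only [R4, Rmap, nab_eq_s14, Fin.sum_univ_six]
    simp only [gIP, nabE, brG, two, e, Jc0, Jc1, Jc2, Jc3, Jc4, Jc5, Fin.sum_univ_six, Pi.add_apply, Pi.sub_apply,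
      Pi.smul_apply, smul_eq_mul, Fin.isValue, Fin.reduceEq, reduceIte, if_true, neg_neg,
      mul_one, mul_zero, zero_mul, one_mul, add_zero, zero_add, sub_zero, zero_sub, neg_zero]
end
end

section
/- On the nilpotent Lie algebra 𝔫, the Nijenhuis tensor of J is totally skew-symmetric, nonzero, and equals −Ψ⁻ as a 3-form: g(N(X,Y),Z) = −Ψ⁻(X,Y,Z) for all X,Y,Z. Moreover, for the Chevalley–Eilenberg differential: dF = −3e₂₃₆, dΨ⁺ = 0, and dΨ⁻ = −(e₁₂₃₄ + e₁₂₅₆ + e₃₄₅₆) (= ∗F). -/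
open scoped BigOperators

noncomputable section

/-- The Lie bracket of the nilpotent Lie algebra 𝔫: [e₃,e₆]=−e₁, [e₂,e₆]=−e₄, [e₂,e₃]=−e₅
(bilinear extension). -/
def brNil (X Y : Fin 6 → ℝ) : Fin 6 → ℝ :=
  (-two 2 5 X Y) • e 0 + (-two 1 5 X Y) • e 3 + (-two 1 2 X Y) • e 4

/-- The torsion 3-form T = −2e₁₄₅ + e₁₃₆ + e₂₃₅ − e₂₄₆ on 𝔫. -/
def TNil (X Y Z : Fin 6 → ℝ) : ℝ :=
  -2 * three 0 3 4 X Y Z + three 0 2 5 X Y Z + three 1 2 4 X Y Z - three 1 3 5 X Y Z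


lemma vec6_0 (a b c d e' f : ℝ) : (![a,b,c,d,e',f] : Fin 6 → ℝ) 0 = a := rfl
lemma vec6_1 (a b c d e' f : ℝ) : (![a,b,c,d,e',f] : Fin 6 → ℝ) 1 = b := rfl
lemma vec6_2 (a b c d e' f : ℝ) : (![a,b,c,d,e',f] : Fin 6 → ℝ) 2 = c := rfl
lemma vec6_3 (a b c d e' f : ℝ) : (![a,b,c,d,e',f] : Fin 6 → ℝ) 3 = d := rfl
lemma vec6_4 (a b c d e' f : ℝ) : (![a,b,c,d,e',f] : Fin 6 → ℝ) 4 = e' := rfl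
lemma vec6_5 (a b c d e' f : ℝ) : (![a,b,c,d,e',f] : Fin 6 → ℝ) 5 = f := rfl

lemma brNil_def (X Y : Fin 6 → ℝ) :
    brNil X Y = ![-two 2 5 X Y, 0, 0, -two 1 5 X Y, -two 1 2 X Y, 0] := by
  funext j
  fin_cases j <;>
    simp [brNil, e, two, vec6_0, vec6_1, vec6_2, vec6_3, vec6_4, vec6_5]

set_option maxHeartbeats 2000000 in
/-- on 𝔫, the Nijenhuis tensor is totally skew-symmetric, nonzero,
and equals −Ψ⁻; moreover dF = −3e₂₃₆, dΨ⁺ = 0 and dΨ⁻ = −(e₁₂₃₄ + e₁₂₅₆ + e₃₄₅₆). -/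
theorem stmt15 :
    (∀ X Y Z : Fin 6 → ℝ, gIP (Nij brNil X Y) Z = -Psim X Y Z) ∧
    (∃ X Y : Fin 6 → ℝ, Nij brNil X Y ≠ 0) ∧
    (∀ X Y Z : Fin 6 → ℝ, gIP (Nij brNil X Y) Z = -gIP (Nij brNil Y X) Z) ∧
    (∀ X Y Z : Fin 6 → ℝ, gIP (Nij brNil X Y) Z = -gIP (Nij brNil X Z) Y) ∧
    (∀ X Y Z : Fin 6 → ℝ, d2 brNil Fform X Y Z = -3 * three 1 2 5 X Y Z) ∧
    (∀ X Y Z W : Fin 6 → ℝ, d3 brNil Psip X Y Z W = 0) ∧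
    (∀ X Y Z W : Fin 6 → ℝ, d3 brNil Psim X Y Z W
      = -(four 0 1 2 3 X Y Z W + four 0 1 4 5 X Y Z W + four 2 3 4 5 X Y Z W)) := by
  have h1 : ∀ X Y Z : Fin 6 → ℝ, gIP (Nij brNil X Y) Z = -Psim X Y Z := by
    intro X Y Z
    simp only [gIP, Nij, brNil_def, Jc, two, Psim, three, Fin.sum_univ_six, Pi.sub_apply,
      vec6_0, vec6_1, vec6_2, vec6_3, vec6_4, vec6_5]
    ring
  refine ⟨h1, ⟨e 2, e 5, ?_⟩, ?_, ?_, ?_, ?_, ?_⟩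
  · intro h
    have h2 := h1 (e 2) (e 5) (e 0)
    rw [h] at h2
    simp [gIP, Psim, three, e, Fin.sum_univ_six] at h2
  · intro X Y Z; rw [h1, h1]; simp only [Psim, three]; ring
  · intro X Y Z; rw [h1, h1]; simp only [Psim, three]; ring
  · intro X Y Z
    simp only [d2, brNil_def, Fform, two, three,
      vec6_0, vec6_1, vec6_2, vec6_3, vec6_4, vec6_5]
    ring
  · intro X Y Z W
    simp only [d3, brNil_def, Psip, three, two,
      vec6_0, vec6_1, vec6_2, vec6_3, vec6_4, vec6_5]
    ring
  · intro X Y Z W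
    simp only [d3, brNil_def, Psim, four, three, two,
      vec6_0, vec6_1, vec6_2, vec6_3, vec6_4, vec6_5]
    ring
end
end

section
/- On the nilpotent Lie algebra 𝔫, both the torsion 3-form T = −2e₁₄₅ + e₁₃₆ + e₂₃₅ − e₂₄₆ and the Nijenhuis 3-form N = −Ψ⁻ are parallel with respect to the torsion connection ∇ associated with T: (∇_X T)(Y,Z,V) = 0 and (∇_X Ψ⁻)(Y,Z,V) = 0 for all X,Y,Z,V. -/
open scoped BigOperators

noncomputable section

set_option maxHeartbeats 1000000 in
lemma nabA0 (X Y : Fin 6 → ℝ) : nab brNil TNil X Y 0 = X 4 * Y 3 - X 3 * Y 4 := by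
  simp only [nab, brNil, gIP, e, two, TNil, three, Fin.sum_univ_six, Pi.add_apply,
    Pi.smul_apply, smul_eq_mul, Fin.isValue, Fin.reduceEq, reduceIte]
  norm_num
  ring

set_option maxHeartbeats 1000000 in
lemma nabA1 (X Y : Fin 6 → ℝ) : nab brNil TNil X Y 1 = -(X 3 * Y 5) - X 4 * Y 2 := by
  simp only [nab, brNil, gIP, e, two, TNil, three, Fin.sum_univ_six, Pi.add_apply,
    Pi.smul_apply, smul_eq_mul, Fin.isValue, Fin.reduceEq, reduceIte]
  norm_num
  ring

set_option maxHeartbeats 1000000 in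
lemma nabA2 (X Y : Fin 6 → ℝ) : nab brNil TNil X Y 2 = X 4 * Y 1 - X 0 * Y 5 := by
  simp only [nab, brNil, gIP, e, two, TNil, three, Fin.sum_univ_six, Pi.add_apply,
    Pi.smul_apply, smul_eq_mul, Fin.isValue, Fin.reduceEq, reduceIte]
  norm_num
  ring

set_option maxHeartbeats 1000000 in
lemma nabA3 (X Y : Fin 6 → ℝ) : nab brNil TNil X Y 3 = X 0 * Y 4 - X 4 * Y 0 := by
  simp only [nab, brNil, gIP, e, two, TNil, three, Fin.sum_univ_six, Pi.add_apply,
    Pi.smul_apply, smul_eq_mul, Fin.isValue, Fin.reduceEq, reduceIte]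
  norm_num
  ring

set_option maxHeartbeats 1000000 in
lemma nabA4 (X Y : Fin 6 → ℝ) : nab brNil TNil X Y 4 = X 3 * Y 0 - X 0 * Y 3 := by
  simp only [nab, brNil, gIP, e, two, TNil, three, Fin.sum_univ_six, Pi.add_apply,
    Pi.smul_apply, smul_eq_mul, Fin.isValue, Fin.reduceEq, reduceIte]
  norm_num
  ring

set_option maxHeartbeats 1000000 in
lemma nabA5 (X Y : Fin 6 → ℝ) : nab brNil TNil X Y 5 = X 0 * Y 2 + X 3 * Y 1 := by
  simp only [nab, brNil, gIP, e, two, TNil, three, Fin.sum_univ_six, Pi.add_apply,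
    Pi.smul_apply, smul_eq_mul, Fin.isValue, Fin.reduceEq, reduceIte]
  norm_num
  ring

/-- on 𝔫, both T = −2e₁₄₅ + e₁₃₆ + e₂₃₅ − e₂₄₆ and N = −Ψ⁻ are ∇-parallel. -/
theorem stmt17 :
    (∀ X Y Z V : Fin 6 → ℝ, nabForm3 brNil TNil TNil X Y Z V = 0) ∧
    (∀ X Y Z V : Fin 6 → ℝ, nabForm3 brNil TNil Psim X Y Z V = 0) := by
  constructor <;> intro X Y Z V <;>
    simp only [nabForm3, TNil, Psim, three, nabA0, nabA1, nabA2, nabA3, nabA4, nabA5] <;>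
    ring
end
end
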